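/- arXiv:2410.11333 — 3 statements merged into one kernel-verified Lean document; each statement's English description precedes it below -/
import Mathlib

section
/- Under the stationary continuous-time Markov chain setting, let (h_n) be a sequence of positive reals with h_n → 0 and n h_n → ∞, and set t_j = j h_n. Then for every i ∈ S, the random variables (1/n) ∑_{j=1}^{n} 1_{{Z_{t_{j−1}} = i}} − (1/(n h_n)) ∫_0^{n h_n} 1_{{Z_s = i}} ds converge to 0 in probability as n → ∞. -/
open MeasureTheory Finset Filter

/-- The σ-algebra generated by `(Z_u : 0 ≤ u ≤ s)`. -/
def filtZ {Ω : Type*} {N : ℕ} (Z : ℝ → Ω → Fin N) (s : ℝ) : MeasurableSpace Ω :=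
  ⨆ u ∈ Set.Icc (0 : ℝ) s, MeasurableSpace.comap (Z u) ⊤

lemma keyEst {Ω : Type*} [MeasurableSpace Ω] (ℙ : Measure Ω) [IsProbabilityMeasure ℙ]
    {N : ℕ} (Q : Matrix (Fin N) (Fin N) ℝ) (Z : ℝ → Ω → Fin N)
    (hZmeas : Measurable fun p : ℝ × Ω => Z p.1 p.2)
    (hMarkov : ∀ s t : ℝ, 0 ≤ s → s ≤ t → ∀ k : Fin N,
      MeasureTheory.condExp (filtZ Z s) ℙ (fun ω => if Z t ω = k then (1 : ℝ) else 0)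
        =ᵐ[ℙ] fun ω => NormedSpace.exp ((t - s) • Q) (Z s ω) k)
    (i : Fin N) {s t : ℝ} (hs : 0 ≤ s) (hst : s ≤ t) :
    ∫ ω, |(if Z t ω = i then (1:ℝ) else 0) - (if Z s ω = i then (1:ℝ) else 0)| ∂ℙ
      ≤ ∑ k, |NormedSpace.exp ((t - s) • Q) k i - (1 : Matrix (Fin N) (Fin N) ℝ) k i| := by
  classical
  set P := NormedSpace.exp ((t - s) • Q) with hPdef
  have hZt : ∀ r : ℝ, Measurable (Z r) := fun r => hZmeas.comp measurable_prodMk_left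
  have hset : ∀ (r : ℝ) (k : Fin N), MeasurableSet {ω | Z r ω = k} := fun r k =>
    hZt r (measurableSet_singleton k)
  have hFmeas : ∀ (r : ℝ) (k : Fin N),
      Measurable fun ω => (if Z r ω = k then (1:ℝ) else 0) := fun r k =>
    Measurable.ite (hset r k) measurable_const measurable_const
  have hFint : ∀ (r : ℝ) (k : Fin N),
      Integrable (fun ω => (if Z r ω = k then (1:ℝ) else 0)) ℙ := fun r k =>
    (integrable_const (1:ℝ)).mono' (hFmeas r k).aestronglyMeasurable
      (Eventually.of_forall fun ω => by split <;> simp)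
  have hm : filtZ Z s ≤ ‹MeasurableSpace Ω› := by
    refine iSup₂_le fun u _ => ?_
    intro A hA
    obtain ⟨B, -, rfl⟩ := hA
    exact hZt u (show MeasurableSet B from trivial)
  have hAfilt : MeasurableSet[filtZ Z s] {ω | Z s ω = i} := by
    have h1 : MeasurableSpace.comap (Z s) ⊤ ≤ filtZ Z s :=
      le_biSup (f := fun u => MeasurableSpace.comap (Z u) ⊤)
        (Set.mem_Icc.mpr ⟨hs, le_refl s⟩)
    exact h1 _ ⟨{i}, trivial, rfl⟩
  set p : Fin N → ℝ := fun k => (ℙ {ω | Z s ω = k}).toReal with hpdef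
  have hpk : ∀ k, ∫ ω, (if Z s ω = k then (1:ℝ) else 0) ∂ℙ = p k := by
    intro k
    rw [show (fun ω => if Z s ω = k then (1:ℝ) else 0)
        = Set.indicator {ω | Z s ω = k} (fun _ => (1:ℝ)) from
      funext fun ω => by by_cases hω : Z s ω = k <;> simp [Set.indicator, hω]]
    rw [integral_indicator (hset s k), setIntegral_const, smul_eq_mul, mul_one, measureReal_def]
  have hp0 : ∀ k, 0 ≤ p k := fun k => ENNReal.toReal_nonneg
  have hp1 : ∀ k, p k ≤ 1 := fun k => by
    rw [hpdef]
    exact ENNReal.toReal_le_of_le_ofReal zero_le_one (by simpa using prob_le_one)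
  -- ∫ F t = ∑ k, P k i * p k
  have e1 : ∫ ω, (if Z t ω = i then (1:ℝ) else 0) ∂ℙ = ∑ k, P k i * p k := by
    rw [← integral_condExp hm (f := fun ω => if Z t ω = i then (1:ℝ) else 0),
      integral_congr_ae (hMarkov s t hs hst i)]
    have hrw : ∀ ω, P (Z s ω) i = ∑ k, (if Z s ω = k then (1:ℝ) else 0) * P k i := by
      intro ω; simp [ite_mul, Finset.sum_ite_eq]
    rw [integral_congr_ae (Eventually.of_forall hrw),
      integral_finset_sum _ (fun k _ => (hFint s k).mul_const _)]
    refine Finset.sum_congr rfl fun k _ => ?_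
    rw [integral_mul_const, hpk k, mul_comm]
  -- ∫ F s * F t = P i i * p i
  have e2 : ∫ ω, (if Z s ω = i then (1:ℝ) else 0) * (if Z t ω = i then (1:ℝ) else 0) ∂ℙ
      = P i i * p i := by
    have hind : (fun ω => (if Z s ω = i then (1:ℝ) else 0) * (if Z t ω = i then (1:ℝ) else 0))
        = Set.indicator {ω | Z s ω = i} (fun ω => (if Z t ω = i then (1:ℝ) else 0)) :=
      funext fun ω => by by_cases hω : Z s ω = i <;> simp [Set.indicator, hω]
    rw [hind, integral_indicator (hset s i),
      ← setIntegral_condExp hm (hFint t i) hAfilt,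
      setIntegral_congr_ae (hset s i) ((hMarkov s t hs hst i).mono fun ω hω _ => hω),
      setIntegral_congr_fun (hset s i) (fun ω hω => by
        show P (Z s ω) i = P i i
        rw [show Z s ω = i from hω]),
      setIntegral_const, smul_eq_mul, mul_comm, measureReal_def]
  -- pointwise absolute value identity
  have habs : ∀ ω, |(if Z t ω = i then (1:ℝ) else 0) - (if Z s ω = i then (1:ℝ) else 0)|
      = (if Z s ω = i then (1:ℝ) else 0) + (if Z t ω = i then (1:ℝ) else 0)
        - 2 * ((if Z s ω = i then (1:ℝ) else 0) * (if Z t ω = i then (1:ℝ) else 0)) := by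
    intro ω
    by_cases h1 : Z t ω = i <;> by_cases h2 : Z s ω = i <;> simp [h1, h2] <;> norm_num
  have hprodint : Integrable
      (fun ω => (if Z s ω = i then (1:ℝ) else 0) * (if Z t ω = i then (1:ℝ) else 0)) ℙ :=
    (integrable_const (1:ℝ)).mono' ((hFmeas s i).mul (hFmeas t i)).aestronglyMeasurable
      (Eventually.of_forall fun ω => by
        by_cases h1 : Z t ω = i <;> by_cases h2 : Z s ω = i <;> simp [h1, h2])
  have e3 : ∫ ω, |(if Z t ω = i then (1:ℝ) else 0) - (if Z s ω = i then (1:ℝ) else 0)| ∂ℙ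
      = p i + ∑ k, P k i * p k - 2 * (P i i * p i) := by
    have hadd : Integrable (fun ω =>
        (if Z s ω = i then (1:ℝ) else 0) + (if Z t ω = i then (1:ℝ) else 0)) ℙ :=
      (hFint s i).add (hFint t i)
    have hmul : Integrable (fun ω =>
        2 * ((if Z s ω = i then (1:ℝ) else 0) * (if Z t ω = i then (1:ℝ) else 0))) ℙ :=
      hprodint.const_mul 2
    rw [integral_congr_ae (Eventually.of_forall habs), integral_sub hadd hmul,
      integral_add (hFint s i) (hFint t i), integral_const_mul, hpk i, e1, e2]
  rw [e3]
  -- final bound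
  have hsummand : ∀ k : Fin N,
      ((if k = i then (1:ℝ) else 0) + P k i - 2 * (if k = i then (1:ℝ) else 0) * P k i) * p k
        ≤ |P k i - (1 : Matrix (Fin N) (Fin N) ℝ) k i| := by
    intro k
    by_cases hk : k = i
    · subst hk
      rw [Matrix.one_apply_eq]
      have h1 : (1:ℝ) - P k k ≤ |P k k - 1| := by rw [abs_sub_comm]; exact le_abs_self _
      have h2 : (0:ℝ) ≤ |P k k - 1| := abs_nonneg _
      have h3 := hp0 k; have h4 := hp1 k
      have h5 : ((1:ℝ) - P k k) * p k ≤ |P k k - 1| * p k :=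
        mul_le_mul_of_nonneg_right h1 h3
      have h6 : |P k k - 1| * p k ≤ |P k k - 1| := by nlinarith
      simp only [eq_self_iff_true, if_true]
      nlinarith [h5, h6]
    · rw [Matrix.one_apply_ne hk]
      have h1 : P k i ≤ |P k i| := le_abs_self _
      have h2 : (0:ℝ) ≤ |P k i| := abs_nonneg _
      have h3 := hp0 k; have h4 := hp1 k
      simp only [if_neg hk, sub_zero]
      nlinarith
  calc p i + ∑ k, P k i * p k - 2 * (P i i * p i)
      = ∑ k, ((if k = i then (1:ℝ) else 0) + P k i
          - 2 * (if k = i then (1:ℝ) else 0) * P k i) * p k := by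
        simp only [add_mul, sub_mul, Finset.sum_add_distrib, Finset.sum_sub_distrib,
          ite_mul, one_mul, zero_mul, mul_ite, mul_zero, Finset.sum_ite_eq',
          Finset.mem_univ, if_pos]
        ring
    _ ≤ ∑ k, |P k i - (1 : Matrix (Fin N) (Fin N) ℝ) k i| :=
        Finset.sum_le_sum fun k _ => hsummand k

/-- Lemma 6.3: the discrete average of indicators matches the time average in probability. -/
theorem stmt7 {Ω : Type*} [MeasurableSpace Ω] (ℙ : Measure Ω) [IsProbabilityMeasure ℙ]
    (N : ℕ) (hN : 2 ≤ N)
    (Q : Matrix (Fin N) (Fin N) ℝ)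
    (hQoff : ∀ i j : Fin N, i ≠ j → 0 < Q i j)
    (hQdiag : ∀ i : Fin N, Q i i = -∑ j ∈ Finset.univ.erase i, Q i j)
    (π : Fin N → ℝ)
    (hπnn : ∀ i, 0 ≤ π i) (hπsum : ∑ i, π i = 1)
    (hπQ : ∀ j, ∑ i, π i * Q i j = 0)
    (hπuniq : ∀ π' : Fin N → ℝ, (∀ i, 0 ≤ π' i) → (∑ i, π' i = 1) →
      (∀ j, ∑ i, π' i * Q i j = 0) → π' = π)
    (Z : ℝ → Ω → Fin N)
    (hZmeas : Measurable fun p : ℝ × Ω => Z p.1 p.2)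
    (hZ0 : ∀ i, ℙ {ω | Z 0 ω = i} = ENNReal.ofReal (π i))
    (hMarkov : ∀ s t : ℝ, 0 ≤ s → s ≤ t → ∀ k : Fin N,
      MeasureTheory.condExp (filtZ Z s) ℙ (fun ω => if Z t ω = k then (1 : ℝ) else 0)
        =ᵐ[ℙ] fun ω => NormedSpace.exp ((t - s) • Q) (Z s ω) k)
    (h : ℕ → ℝ) (hhpos : ∀ n, 0 < h n)
    (hh0 : Tendsto h atTop (nhds 0))
    (hnh : Tendsto (fun n : ℕ => (n : ℝ) * h n) atTop atTop) :
    ∀ i : Fin N,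
      TendstoInMeasure ℙ
        (fun (n : ℕ) (ω : Ω) =>
          (1 / (n : ℝ)) *
              ∑ j ∈ Finset.Icc 1 n,
                (if Z (((j : ℝ) - 1) * h n) ω = i then (1 : ℝ) else 0) -
            (1 / ((n : ℝ) * h n)) *
              ∫ s in (0 : ℝ)..((n : ℝ) * h n), (if Z s ω = i then (1 : ℝ) else 0))
        atTop (fun _ => (0 : ℝ)) := by
  intro i
  classical
  set X : ℕ → Ω → ℝ := fun n ω =>
    (1 / (n : ℝ)) *
        ∑ j ∈ Finset.Icc 1 n,
          (if Z (((j : ℝ) - 1) * h n) ω = i then (1 : ℝ) else 0) -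
      (1 / ((n : ℝ) * h n)) *
        ∫ s in (0 : ℝ)..((n : ℝ) * h n), (if Z s ω = i then (1 : ℝ) else 0) with hXdef
  have hZt : ∀ r : ℝ, Measurable (Z r) := fun r => hZmeas.comp measurable_prodMk_left
  have hset : ∀ (r : ℝ) (k : Fin N), MeasurableSet {ω | Z r ω = k} := fun r k =>
    hZt r (measurableSet_singleton k)
  have hFmeas : ∀ (r : ℝ) (k : Fin N),
      Measurable fun ω => (if Z r ω = k then (1:ℝ) else 0) := fun r k =>
    Measurable.ite (hset r k) measurable_const measurable_const
  have hFint : ∀ (r : ℝ) (k : Fin N),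
      Integrable (fun ω => (if Z r ω = k then (1:ℝ) else 0)) ℙ := fun r k =>
    (integrable_const (1:ℝ)).mono' (hFmeas r k).aestronglyMeasurable
      (Eventually.of_forall fun ω => by split <;> simp)
  -- measurability in the time variable / jointly
  have hpair2 : Measurable fun q : Ω × ℝ => (if Z q.2 q.1 = i then (1:ℝ) else 0) :=
    Measurable.ite ((hZmeas.comp measurable_swap) (measurableSet_singleton i))
      measurable_const measurable_const
  have hII : ∀ (ω : Ω) (a b : ℝ),
      IntervalIntegrable (fun s => (if Z s ω = i then (1:ℝ) else 0)) volume a b := by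
    intro ω a b
    have hms : Measurable fun s : ℝ => (if Z s ω = i then (1:ℝ) else 0) :=
      Measurable.ite ((hZmeas.comp (measurable_id.prodMk measurable_const))
        (measurableSet_singleton i)) measurable_const measurable_const
    rw [intervalIntegrable_iff]
    haveI : IsFiniteMeasure (volume.restrict (Set.uIoc a b)) :=
      ⟨by rw [Measure.restrict_apply_univ, Set.uIoc]; exact measure_Ioc_lt_top⟩
    exact (integrable_const (1:ℝ)).mono' hms.aestronglyMeasurable.restrict
      (Eventually.of_forall fun s => by split <;> simp)
  -- the modulus-of-continuity function
  set M : ℝ → ℝ := fun u =>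
    ∑ k, |NormedSpace.exp (u • Q) k i - (1 : Matrix (Fin N) (Fin N) ℝ) k i| with hMdef
  have hkey : ∀ s t : ℝ, 0 ≤ s → s ≤ t →
      ∫ ω, |(if Z t ω = i then (1:ℝ) else 0) - (if Z s ω = i then (1:ℝ) else 0)| ∂ℙ
        ≤ M (t - s) := fun s t hs hst => keyEst ℙ Q Z hZmeas hMarkov i hs hst
  have hMsmall : ∀ ε : ℝ, 0 < ε → ∃ δ : ℝ, 0 < δ ∧ ∀ u : ℝ, 0 ≤ u → u ≤ δ → M u ≤ ε := by
    intro ε hε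
    have hexp : Continuous fun u : ℝ => NormedSpace.exp (u • Q) := by
      letI : SeminormedRing (Matrix (Fin N) (Fin N) ℝ) := Matrix.linftyOpSemiNormedRing
      letI : NormedRing (Matrix (Fin N) (Fin N) ℝ) := Matrix.linftyOpNormedRing
      letI : NormedAlgebra ℝ (Matrix (Fin N) (Fin N) ℝ) := Matrix.linftyOpNormedAlgebra
      letI : NormedAlgebra ℚ (Matrix (Fin N) (Fin N) ℝ) :=
        { (inferInstance : Algebra ℚ (Matrix (Fin N) (Fin N) ℝ)) with
          norm_smul_le := fun q M => by
            rw [← Rat.cast_smul_eq_qsmul ℝ q M]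
            exact (norm_smul_le (q:ℝ) M).trans_eq (by simp) }
      exact NormedSpace.exp_continuous.comp (continuous_id.smul continuous_const)
    have hMc : Continuous M :=
      continuous_finset_sum _ fun k _ => ((hexp.matrix_elem k i).sub continuous_const).abs
    have h0 : M 0 = 0 := by simp [hMdef, zero_smul, NormedSpace.exp_zero]
    obtain ⟨δ, hδ, hδ2⟩ := Metric.tendsto_nhds_nhds.mp (hMc.tendsto 0) ε hε
    refine ⟨δ/2, by positivity, fun u hu0 huδ => ?_⟩
    have hd : dist u 0 < δ := by rw [Real.dist_eq, sub_zero, abs_of_nonneg hu0]; linarith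
    have h3 := hδ2 hd
    rw [Real.dist_eq, h0, sub_zero] at h3
    exact (le_abs_self _).trans h3.le
  -- integrability of X n for n ≥ 1
  have hXint : ∀ n : ℕ, 1 ≤ n → Integrable (X n) ℙ := by
    intro n hn
    have h1 : Integrable (fun ω => (1 / (n : ℝ)) *
        ∑ j ∈ Finset.Icc 1 n, (if Z (((j : ℝ) - 1) * h n) ω = i then (1 : ℝ) else 0)) ℙ :=
      (integrable_finset_sum _ fun j _ => hFint _ i).const_mul _
    have h2meas : Measurable fun ω => ∫ s in (0:ℝ)..((n:ℝ) * h n),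
        (if Z s ω = i then (1:ℝ) else 0) := by
      have hT : (0:ℝ) ≤ (n:ℝ) * h n := mul_nonneg (Nat.cast_nonneg n) (hhpos n).le
      have : ∀ ω, (∫ s in (0:ℝ)..((n:ℝ) * h n), (if Z s ω = i then (1:ℝ) else 0))
          = ∫ s in Set.Ioc (0:ℝ) ((n:ℝ) * h n), (if Z s ω = i then (1:ℝ) else 0) := fun ω =>
        intervalIntegral.integral_of_le hT
      simp_rw [this]
      exact (hpair2.stronglyMeasurable.integral_prod_right').measurable
    have h2 : Integrable (fun ω => (1 / ((n:ℝ) * h n)) *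
        ∫ s in (0:ℝ)..((n:ℝ) * h n), (if Z s ω = i then (1:ℝ) else 0)) ℙ := by
      refine ((integrable_const ((n:ℝ) * h n)).mono' h2meas.aestronglyMeasurable
        (Eventually.of_forall fun ω => ?_)).const_mul _
      have hT : (0:ℝ) ≤ (n:ℝ) * h n := mul_nonneg (Nat.cast_nonneg n) (hhpos n).le
      calc ‖∫ s in (0:ℝ)..((n:ℝ) * h n), (if Z s ω = i then (1:ℝ) else 0)‖
          ≤ ∫ s in (0:ℝ)..((n:ℝ) * h n), ‖(if Z s ω = i then (1:ℝ) else 0)‖ :=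
            intervalIntegral.norm_integral_le_integral_norm hT
        _ ≤ ∫ s in (0:ℝ)..((n:ℝ) * h n), (1:ℝ) := by
            refine intervalIntegral.integral_mono_on hT ((hII ω _ _).norm)
              intervalIntegrable_const fun s _ => ?_
            split <;> simp
        _ = (n:ℝ) * h n := by simp
    exact h1.sub h2
  -- the L¹ bound
  have hL1 : ∀ ε : ℝ, 0 < ε → ∃ N₀ : ℕ, ∀ n ≥ N₀, ∫ ω, |X n ω| ∂ℙ ≤ ε := by
    intro ε hε
    obtain ⟨δ, hδpos, hδ⟩ := hMsmall ε hε
    obtain ⟨N₁, hN₁⟩ := (Metric.tendsto_atTop.mp hh0) δ hδpos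
    refine ⟨max N₁ 1, fun n hn => ?_⟩
    have hn1 : 1 ≤ n := le_trans (le_max_right _ _) hn
    have hhn : h n ≤ δ := by
      have := hN₁ n (le_trans (le_max_left _ _) hn)
      rw [Real.dist_eq, sub_zero, abs_of_pos (hhpos n)] at this
      exact this.le
    set H := h n with hHdef
    have hH : 0 < H := hhpos n
    have hnpos : (0:ℝ) < (n:ℝ) := by exact_mod_cast hn1
    have hnH : (0:ℝ) < (n:ℝ) * H := by positivity
    -- the per-interval L¹ comparison
    have hinner : ∀ k : ℕ, ∀ s ∈ Set.Ioc ((k:ℝ)*H) (((k:ℝ)+1)*H),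
        ∫ ω, |(if Z ((k:ℝ)*H) ω = i then (1:ℝ) else 0)
            - (if Z s ω = i then (1:ℝ) else 0)| ∂ℙ ≤ ε := by
      intro k s hsmem
      have h1 : ∫ ω, |(if Z ((k:ℝ)*H) ω = i then (1:ℝ) else 0)
          - (if Z s ω = i then (1:ℝ) else 0)| ∂ℙ
          = ∫ ω, |(if Z s ω = i then (1:ℝ) else 0)
          - (if Z ((k:ℝ)*H) ω = i then (1:ℝ) else 0)| ∂ℙ := by
        refine integral_congr_ae (Eventually.of_forall fun ω => ?_)
        exact abs_sub_comm _ _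
      have hkH : (0:ℝ) ≤ (k:ℝ)*H := by positivity
      have hks : (k:ℝ)*H ≤ s := hsmem.1.le
      rw [h1]
      refine (hkey _ _ hkH hks).trans (hδ _ (by linarith) ?_)
      have := hsmem.2
      nlinarith
    -- pointwise bound |X n ω| ≤ (1/(nH)) * G ω
    set G : Ω → ℝ := fun ω => ∑ k ∈ range n,
      ∫ s in Set.Ioc ((k:ℝ)*H) (((k:ℝ)+1)*H),
        |(if Z ((k:ℝ)*H) ω = i then (1:ℝ) else 0)
          - (if Z s ω = i then (1:ℝ) else 0)| with hGdef
    have hab : ∀ k : ℕ, (k:ℝ)*H ≤ ((k:ℝ)+1)*H := fun k => by nlinarith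
    have hXbound : ∀ ω, |X n ω| ≤ (1 / ((n:ℝ) * H)) * G ω := by
      intro ω
      -- rewrite the discrete sum
      have hidx : ∑ j ∈ Finset.Icc 1 n, (if Z (((j:ℝ)-1)*H) ω = i then (1:ℝ) else 0)
          = ∑ k ∈ range n, (if Z ((k:ℝ)*H) ω = i then (1:ℝ) else 0) := by
        rw [← Finset.Ico_add_one_right_eq_Icc, Finset.sum_Ico_eq_sum_range]
        refine Finset.sum_congr (by norm_num) fun k _ => ?_
        have : (((1+k : ℕ) : ℝ) - 1) * H = (k:ℝ)*H := by push_cast; ring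
        rw [this]
      have hsum3 : (∫ s in (0:ℝ)..((n:ℝ)*H), (if Z s ω = i then (1:ℝ) else 0))
          = ∑ k ∈ range n, ∫ s in ((k:ℝ)*H)..(((k:ℝ)+1)*H),
              (if Z s ω = i then (1:ℝ) else 0) := by
        have hadj := intervalIntegral.sum_integral_adjacent_intervals
          (a := fun k : ℕ => (k:ℝ)*H) (n := n)
          (f := fun s => (if Z s ω = i then (1:ℝ) else 0)) (μ := volume)
          (fun k _ => hII ω _ _)
        push_cast at hadj
        rw [zero_mul] at hadj
        exact hadj.symm
      have hXeq : X n ω = (1 / ((n:ℝ)*H)) * ∑ k ∈ range n,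
          ∫ s in ((k:ℝ)*H)..(((k:ℝ)+1)*H),
            ((if Z ((k:ℝ)*H) ω = i then (1:ℝ) else 0)
              - (if Z s ω = i then (1:ℝ) else 0)) := by
        have hconst : ∀ k : ℕ, H * (if Z ((k:ℝ)*H) ω = i then (1:ℝ) else 0)
            = ∫ s in ((k:ℝ)*H)..(((k:ℝ)+1)*H),
                (if Z ((k:ℝ)*H) ω = i then (1:ℝ) else 0) := by
          intro k
          rw [intervalIntegral.integral_const, smul_eq_mul]
          congr 1
          ring
        have hsub : ∀ k : ℕ,
            (∫ s in ((k:ℝ)*H)..(((k:ℝ)+1)*H),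
              ((if Z ((k:ℝ)*H) ω = i then (1:ℝ) else 0)
                - (if Z s ω = i then (1:ℝ) else 0)))
            = (∫ _s in ((k:ℝ)*H)..(((k:ℝ)+1)*H),
                (if Z ((k:ℝ)*H) ω = i then (1:ℝ) else 0))
              - ∫ s in ((k:ℝ)*H)..(((k:ℝ)+1)*H),
                  (if Z s ω = i then (1:ℝ) else 0) := fun k =>
          intervalIntegral.integral_sub intervalIntegrable_const (hII ω _ _)
        show (1 / (n : ℝ)) *
              ∑ j ∈ Finset.Icc 1 n, (if Z (((j : ℝ) - 1) * H) ω = i then (1 : ℝ) else 0) -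
            (1 / ((n : ℝ) * H)) *
              ∫ s in (0 : ℝ)..((n : ℝ) * H), (if Z s ω = i then (1 : ℝ) else 0) = _
        rw [hidx, hsum3]
        simp only [hsub]
        rw [Finset.sum_sub_distrib]
        simp only [← hconst]
        rw [← Finset.mul_sum]
        field_simp
        ring
      rw [hXeq, abs_mul, abs_of_nonneg (by positivity : (0:ℝ) ≤ 1 / ((n:ℝ)*H))]
      refine mul_le_mul_of_nonneg_left ?_ (by positivity)
      refine (Finset.abs_sum_le_sum_abs _ _).trans ?_
      rw [hGdef]
      refine Finset.sum_le_sum fun k _ => ?_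
      have h1 : |∫ s in ((k:ℝ)*H)..(((k:ℝ)+1)*H),
          ((if Z ((k:ℝ)*H) ω = i then (1:ℝ) else 0)
            - (if Z s ω = i then (1:ℝ) else 0))|
          ≤ ∫ s in ((k:ℝ)*H)..(((k:ℝ)+1)*H),
              |(if Z ((k:ℝ)*H) ω = i then (1:ℝ) else 0)
                - (if Z s ω = i then (1:ℝ) else 0)| := by
        have := intervalIntegral.norm_integral_le_integral_norm
          (f := fun s => ((if Z ((k:ℝ)*H) ω = i then (1:ℝ) else 0)
            - (if Z s ω = i then (1:ℝ) else 0))) (μ := volume) (hab k)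
        simpa [Real.norm_eq_abs] using this
      refine h1.trans_eq ?_
      rw [intervalIntegral.integral_of_le (hab k)]
    -- integrability of the per-interval pieces via the product measure
    have hGpieces : ∀ k : ℕ,
        Integrable (fun ω => ∫ s in Set.Ioc ((k:ℝ)*H) (((k:ℝ)+1)*H),
          |(if Z ((k:ℝ)*H) ω = i then (1:ℝ) else 0)
            - (if Z s ω = i then (1:ℝ) else 0)|) ℙ
        ∧ ∫ ω, (∫ s in Set.Ioc ((k:ℝ)*H) (((k:ℝ)+1)*H),
            |(if Z ((k:ℝ)*H) ω = i then (1:ℝ) else 0)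
              - (if Z s ω = i then (1:ℝ) else 0)|) ∂ℙ ≤ ε * H := by
      intro k
      set ν := volume.restrict (Set.Ioc ((k:ℝ)*H) (((k:ℝ)+1)*H)) with hνdef
      haveI : IsFiniteMeasure ν := ⟨by
        rw [hνdef, Measure.restrict_apply_univ]; exact measure_Ioc_lt_top⟩
      set φ : Ω × ℝ → ℝ := fun q =>
        |(if Z ((k:ℝ)*H) q.1 = i then (1:ℝ) else 0)
          - (if Z q.2 q.1 = i then (1:ℝ) else 0)| with hφdef
      have hφmeas : Measurable φ :=
        (((hFmeas ((k:ℝ)*H) i).comp measurable_fst).sub hpair2).abs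
      have hφint : Integrable φ (ℙ.prod ν) :=
        (integrable_const (2:ℝ)).mono' hφmeas.aestronglyMeasurable
          (Eventually.of_forall fun q => by
            rw [hφdef, Real.norm_eq_abs, abs_abs]
            by_cases h1 : Z ((k:ℝ)*H) q.1 = i <;> by_cases h2 : Z q.2 q.1 = i <;>
              simp [h1, h2] <;> norm_num)
      have hfub : ∫ ω, (∫ s, φ (ω, s) ∂ν) ∂ℙ = ∫ s, (∫ ω, φ (ω, s) ∂ℙ) ∂ν :=
        integral_integral_swap hφint
      refine ⟨hφint.integral_prod_left, ?_⟩
      have : (∫ ω, (∫ s in Set.Ioc ((k:ℝ)*H) (((k:ℝ)+1)*H),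
          |(if Z ((k:ℝ)*H) ω = i then (1:ℝ) else 0)
            - (if Z s ω = i then (1:ℝ) else 0)|) ∂ℙ)
          = ∫ s, (∫ ω, φ (ω, s) ∂ℙ) ∂ν := hfub
      rw [this]
      have hb : ∀ s ∈ Set.Ioc ((k:ℝ)*H) (((k:ℝ)+1)*H), (∫ ω, φ (ω, s) ∂ℙ) ≤ ε :=
        fun s hs => hinner k s hs
      calc ∫ s, (∫ ω, φ (ω, s) ∂ℙ) ∂ν
          ≤ ∫ s in Set.Ioc ((k:ℝ)*H) (((k:ℝ)+1)*H), ε := by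
            rw [hνdef]
            refine setIntegral_mono_on ?_ (integrableOn_const ?_)
              measurableSet_Ioc hb
            · exact hφint.integral_prod_right
            · exact measure_Ioc_lt_top.ne
        _ = ε * H := by
            rw [setIntegral_const, Real.volume_real_Ioc_of_le (hab k), smul_eq_mul]
            rw [show ((k:ℝ)+1)*H - (k:ℝ)*H = H by ring]
            ring
    have hGint : Integrable G ℙ :=
      integrable_finset_sum _ fun k _ => (hGpieces k).1
    have hGval : ∫ ω, G ω ∂ℙ ≤ (n:ℝ) * (ε * H) := by
      rw [hGdef]
      have := integral_finset_sum (μ := ℙ) (range n) (fun k _ => (hGpieces k).1)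
      rw [this]
      calc ∑ k ∈ range n, ∫ ω, (∫ s in Set.Ioc ((k:ℝ)*H) (((k:ℝ)+1)*H),
            |(if Z ((k:ℝ)*H) ω = i then (1:ℝ) else 0)
              - (if Z s ω = i then (1:ℝ) else 0)|) ∂ℙ
          ≤ ∑ _k ∈ range n, ε * H := Finset.sum_le_sum fun k _ => (hGpieces k).2
        _ = (n:ℝ) * (ε * H) := by simp [mul_comm]
    calc ∫ ω, |X n ω| ∂ℙ
        ≤ ∫ ω, (1 / ((n:ℝ) * H)) * G ω ∂ℙ := by
          refine integral_mono_of_nonneg (Eventually.of_forall fun ω => abs_nonneg _)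
            (hGint.const_mul _) (Eventually.of_forall fun ω => hXbound ω)
      _ = (1 / ((n:ℝ) * H)) * ∫ ω, G ω ∂ℙ := integral_const_mul _ _
      _ ≤ (1 / ((n:ℝ) * H)) * ((n:ℝ) * (ε * H)) := by
          refine mul_le_mul_of_nonneg_left hGval (by positivity)
      _ = ε := by field_simp
  -- conclude convergence in measure
  rw [tendstoInMeasure_iff_dist]
  intro ε hε
  have hItend : Tendsto (fun n => ∫ ω, |X n ω| ∂ℙ) atTop (nhds 0) := by
    rw [Metric.tendsto_atTop]
    intro ε' hε'
    obtain ⟨N₀, hN₀⟩ := hL1 (ε'/2) (by positivity)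
    refine ⟨N₀, fun n hn => ?_⟩
    have h1 := hN₀ n hn
    have h2 : 0 ≤ ∫ ω, |X n ω| ∂ℙ := integral_nonneg fun ω => abs_nonneg _
    rw [Real.dist_eq, sub_zero, abs_of_nonneg h2]
    linarith
  have hupper : Tendsto (fun n => ENNReal.ofReal (ε⁻¹ * ∫ ω, |X n ω| ∂ℙ)) atTop (nhds 0) := by
    have := ENNReal.tendsto_ofReal (hItend.const_mul ε⁻¹)
    simpa using this
  refine tendsto_of_tendsto_of_tendsto_of_le_of_le' tendsto_const_nhds hupper
    (Eventually.of_forall fun n => zero_le) ?_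
  filter_upwards [eventually_ge_atTop 1] with n hn
  have hint : Integrable (fun ω => |X n ω|) ℙ := (hXint n hn).abs
  have hmarkov := mul_meas_ge_le_integral_of_nonneg
    (Eventually.of_forall fun ω => abs_nonneg (X n ω)) hint ε
  have hsetEq : {ω | ε ≤ dist (X n ω) ((fun _ => (0:ℝ)) ω)} = {ω | ε ≤ |X n ω|} := by
    ext ω; simp [Real.dist_eq]
  rw [hsetEq]
  have h1 : (ℙ {ω | ε ≤ |X n ω|}).toReal ≤ ε⁻¹ * ∫ ω, |X n ω| ∂ℙ := by
    calc (ℙ {ω | ε ≤ |X n ω|}).toReal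
        = ε⁻¹ * (ε * (ℙ {ω | ε ≤ |X n ω|}).toReal) := by field_simp
      _ ≤ ε⁻¹ * ∫ ω, |X n ω| ∂ℙ :=
        mul_le_mul_of_nonneg_left hmarkov (inv_nonneg.mpr hε.le)
  calc ℙ {ω | ε ≤ |X n ω|}
      = ENNReal.ofReal ((ℙ {ω | ε ≤ |X n ω|}).toReal) :=
        (ENNReal.ofReal_toReal (measure_ne_top ℙ _)).symm
    _ ≤ ENNReal.ofReal (ε⁻¹ * ∫ ω, |X n ω| ∂ℙ) := ENNReal.ofReal_le_ofReal h1
end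

section
/- Under the stationary continuous-time Markov chain setting, let (h_n) be a sequence of positive reals with h_n → 0 and n h_n → ∞, set t_j = j h_n, and define K_{ik}(n) = ∑_{j=1}^{n} 1_{{Z_{t_{j−1}} = i}} 1_{{Z_{t_j} = k}}. Then for every i ∈ S, (1/n) K_{ii}(n) converges to π_i in probability as n → ∞. -/
open MeasureTheory Finset Filter

set_option linter.unusedSectionVars false
set_option maxHeartbeats 1000000

section Aux
open NormedSpace

namespace CTMC
variable {N : ℕ}

noncomputable def Pm (Q : Matrix (Fin N) (Fin N) ℝ) (t : ℝ) : Matrix (Fin N) (Fin N) ℝ :=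
  NormedSpace.exp (t • Q)

lemma exp_linear (M : Matrix (Fin N) (Fin N) ℝ) (φ : Matrix (Fin N) (Fin N) ℝ →ₗ[ℝ] ℝ) :
    φ (NormedSpace.exp M) = ∑' k : ℕ, φ ((k.factorial : ℝ)⁻¹ • M ^ k) := by
  letI : SeminormedRing (Matrix (Fin N) (Fin N) ℝ) := Matrix.linftyOpSemiNormedRing
  letI : NormedRing (Matrix (Fin N) (Fin N) ℝ) := Matrix.linftyOpNormedRing
  letI : NormedAlgebra ℝ (Matrix (Fin N) (Fin N) ℝ) := Matrix.linftyOpNormedAlgebra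
  rw [exp_eq_tsum ℝ]
  exact ((expSeries_summable' M).hasSum.mapL φ.toContinuousLinearMap).tsum_eq.symm

lemma exp_entry_hasSum (M : Matrix (Fin N) (Fin N) ℝ) (i j : Fin N) :
    HasSum (fun k : ℕ => ((k.factorial : ℝ)⁻¹ • M ^ k) i j) (NormedSpace.exp M i j) := by
  letI : SeminormedRing (Matrix (Fin N) (Fin N) ℝ) := Matrix.linftyOpSemiNormedRing
  letI : NormedRing (Matrix (Fin N) (Fin N) ℝ) := Matrix.linftyOpNormedRing
  letI : NormedAlgebra ℝ (Matrix (Fin N) (Fin N) ℝ) := Matrix.linftyOpNormedAlgebra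
  rw [exp_eq_tsum ℝ]
  have h := ((expSeries_summable' (𝕂 := ℝ) M).hasSum.mapL
    (Matrix.entryLinearMap ℝ ℝ i j).toContinuousLinearMap)
  exact h

lemma pow_rowsum (Q : Matrix (Fin N) (Fin N) ℝ) (hQ : ∀ i, ∑ j, Q i j = 0)
    (k : ℕ) (hk : 1 ≤ k) (i : Fin N) : ∑ j, (Q ^ k) i j = 0 := by
  obtain ⟨m, rfl⟩ := Nat.exists_eq_add_of_le hk
  rw [add_comm, pow_succ]
  calc ∑ j, (Q ^ m * Q) i j = ∑ j, ∑ l, (Q ^ m) i l * Q l j := by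
        simp [Matrix.mul_apply]
    _ = ∑ l, (Q ^ m) i l * ∑ j, Q l j := by
        rw [Finset.sum_comm]; simp [Finset.mul_sum]
    _ = 0 := by simp [hQ]

lemma pow_pi (Q : Matrix (Fin N) (Fin N) ℝ) (π : Fin N → ℝ)
    (hπ : ∀ j, ∑ i, π i * Q i j = 0)
    (k : ℕ) (hk : 1 ≤ k) : ∀ j : Fin N, ∑ i, π i * (Q ^ k) i j = 0 := by
  induction k with
  | zero => omega
  | succ k ih =>
    intro j
    rcases Nat.eq_or_lt_of_le hk with hk1 | hk2
    · simp only [← hk1, pow_one]; exact hπ j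
    · have hk' : 1 ≤ k := by omega
      rw [pow_succ]
      calc ∑ i, π i * (Q ^ k * Q) i j = ∑ i, ∑ l, π i * ((Q ^ k) i l * Q l j) := by
            simp [Matrix.mul_apply, Finset.mul_sum]
        _ = ∑ l, (∑ i, π i * (Q ^ k) i l) * Q l j := by
            rw [Finset.sum_comm]
            exact Finset.sum_congr rfl fun l _ => by rw [Finset.sum_mul]; exact Finset.sum_congr rfl fun _ _ => by ring
        _ = 0 := by simp [ih hk']

noncomputable def rowSumLM (i : Fin N) : Matrix (Fin N) (Fin N) ℝ →ₗ[ℝ] ℝ where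
  toFun := fun M => ∑ j, M i j
  map_add' := by intros; simp [Finset.sum_add_distrib]
  map_smul' := by intros; simp [Finset.mul_sum]

noncomputable def piLM (π : Fin N → ℝ) (j : Fin N) : Matrix (Fin N) (Fin N) ℝ →ₗ[ℝ] ℝ where
  toFun := fun M => ∑ i, π i * M i j
  map_add' := by intros; simp [Finset.sum_add_distrib, mul_add]
  map_smul' := by intros; simp [Finset.mul_sum]; exact Finset.sum_congr rfl fun _ _ => by ring

lemma Pm_zero (Q : Matrix (Fin N) (Fin N) ℝ) : Pm Q 0 = 1 := by
  letI : SeminormedRing (Matrix (Fin N) (Fin N) ℝ) := Matrix.linftyOpSemiNormedRing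
  letI : NormedRing (Matrix (Fin N) (Fin N) ℝ) := Matrix.linftyOpNormedRing
  letI : NormedAlgebra ℝ (Matrix (Fin N) (Fin N) ℝ) := Matrix.linftyOpNormedAlgebra
  rw [Pm, zero_smul, exp_zero]

lemma Pm_add (Q : Matrix (Fin N) (Fin N) ℝ) (s t : ℝ) :
    Pm Q (s + t) = Pm Q s * Pm Q t := by
  rw [Pm, Pm, Pm, add_smul]
  exact Matrix.exp_add_of_commute _ _ (((Commute.refl Q).smul_left s).smul_right t)

lemma Pm_rowsum (Q : Matrix (Fin N) (Fin N) ℝ) (hQ : ∀ i, ∑ j, Q i j = 0) (t : ℝ) (i : Fin N) :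
    ∑ j, Pm Q t i j = 1 := by
  have h0 : ∑ j, Pm Q t i j = rowSumLM i (NormedSpace.exp (t • Q)) := rfl
  rw [h0, exp_linear, tsum_eq_single 0]
  · simp [rowSumLM, Matrix.one_apply]
  · intro k hk
    have hk1 : 1 ≤ k := Nat.one_le_iff_ne_zero.2 hk
    simp only [rowSumLM, smul_pow t Q k, LinearMap.coe_mk, AddHom.coe_mk, Matrix.smul_apply,
      smul_eq_mul, ← Finset.mul_sum]
    rw [pow_rowsum Q hQ k hk1 i]; ring

lemma Pm_pi (Q : Matrix (Fin N) (Fin N) ℝ) (π : Fin N → ℝ)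
    (hπ : ∀ j, ∑ i, π i * Q i j = 0) (t : ℝ) (j : Fin N) :
    ∑ i, π i * Pm Q t i j = π j := by
  have h0 : ∑ i, π i * Pm Q t i j = piLM π j (NormedSpace.exp (t • Q)) := rfl
  rw [h0, exp_linear, tsum_eq_single 0]
  · show ∑ i, π i * ((Nat.factorial 0 : ℝ)⁻¹ • (t • Q) ^ 0) i j = π j
    simp only [pow_zero, Nat.factorial_zero, Nat.cast_one, inv_one, one_smul, Matrix.one_apply,
      mul_ite, mul_one, mul_zero]
    simp
  · intro k hk
    have hk1 : 1 ≤ k := Nat.one_le_iff_ne_zero.2 hk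
    show ∑ i, π i * ((k.factorial : ℝ)⁻¹ • (t • Q) ^ k) i j = 0
    have e : ∀ i : Fin N, ((k.factorial : ℝ)⁻¹ • (t • Q) ^ k) i j
        = (k.factorial : ℝ)⁻¹ * t ^ k * (Q ^ k) i j := fun i => by
      rw [smul_pow]; simp [Matrix.smul_apply]; ring
    simp_rw [e]
    calc ∑ i, π i * ((k.factorial : ℝ)⁻¹ * t ^ k * (Q ^ k) i j)
        = (k.factorial : ℝ)⁻¹ * t ^ k * ∑ i, π i * (Q ^ k) i j := by
          rw [Finset.mul_sum]; exact Finset.sum_congr rfl fun i _ => by ring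
      _ = 0 := by rw [pow_pi Q π hπ k hk1 j, mul_zero]
end CTMC

namespace CTMC
variable {N : ℕ}

lemma exp_smul_one (c : ℝ) :
    NormedSpace.exp (c • (1 : Matrix (Fin N) (Fin N) ℝ)) = Real.exp c • 1 := by
  letI : SeminormedRing (Matrix (Fin N) (Fin N) ℝ) := Matrix.linftyOpSemiNormedRing
  letI : NormedRing (Matrix (Fin N) (Fin N) ℝ) := Matrix.linftyOpNormedRing
  letI : NormedAlgebra ℝ (Matrix (Fin N) (Fin N) ℝ) := Matrix.linftyOpNormedAlgebra
  letI : NormedAlgebra ℚ (Matrix (Fin N) (Fin N) ℝ) := Matrix.linftyOpNormedAlgebra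
  rw [← Algebra.algebraMap_eq_smul_one]
  refine (map_exp (algebraMap ℝ (Matrix (Fin N) (Fin N) ℝ)) (continuous_algebraMap ℝ _) c).symm.trans ?_
  rw [Real.exp_eq_exp_ℝ, Algebra.algebraMap_eq_smul_one]

lemma exp_pow_entry_nonneg (A : Matrix (Fin N) (Fin N) ℝ) (hA : ∀ i j, 0 ≤ A i j) :
    ∀ (k : ℕ) (i j : Fin N), 0 ≤ (A ^ k) i j := by
  intro k
  induction k with
  | zero =>
    intro i j; rw [pow_zero]
    by_cases hij : i = j <;> simp [Matrix.one_apply, hij]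
  | succ k ih =>
    intro i j; rw [pow_succ, Matrix.mul_apply]
    exact Finset.sum_nonneg fun l _ => mul_nonneg (ih i l) (hA l j)

lemma exp_entry_nonneg (A : Matrix (Fin N) (Fin N) ℝ) (hA : ∀ i j, 0 ≤ A i j) (i j : Fin N) :
    0 ≤ NormedSpace.exp A i j := by
  rw [← (exp_entry_hasSum A i j).tsum_eq]
  refine tsum_nonneg fun k => ?_
  have : ((k.factorial : ℝ)⁻¹ • A ^ k) i j = (k.factorial : ℝ)⁻¹ * (A ^ k) i j := rfl
  rw [this]
  exact mul_nonneg (by positivity) (exp_pow_entry_nonneg A hA k i j)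

lemma exp_entry_ge (A : Matrix (Fin N) (Fin N) ℝ) (hA : ∀ i j, 0 ≤ A i j) (i j : Fin N) (k0 : ℕ) :
    ((k0.factorial : ℝ)⁻¹ • A ^ k0) i j ≤ NormedSpace.exp A i j := by
  refine le_hasSum (exp_entry_hasSum A i j) k0 fun k _ => ?_
  have : ((k.factorial : ℝ)⁻¹ • A ^ k) i j = (k.factorial : ℝ)⁻¹ * (A ^ k) i j := rfl
  rw [this]
  exact mul_nonneg (by positivity) (exp_pow_entry_nonneg A hA k i j)

section Struct
variable (Q : Matrix (Fin N) (Fin N) ℝ)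

/-- decomposition `t • Q = (-(t*q)) • 1 + t • (Q + q • 1)`. -/
lemma Pm_decomp (q t : ℝ) :
    Pm Q t = Real.exp (-(t * q)) • NormedSpace.exp (t • (Q + q • (1 : Matrix (Fin N) (Fin N) ℝ))) := by
  have hdec : t • Q = (-(t * q)) • (1 : Matrix (Fin N) (Fin N) ℝ)
      + t • (Q + q • (1 : Matrix (Fin N) (Fin N) ℝ)) := by
    rw [smul_add, smul_smul]; module
  rw [Pm, hdec, Matrix.exp_add_of_commute _ _ ((Commute.one_left _).smul_left _),
    exp_smul_one, smul_mul_assoc, one_mul]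

lemma A_nonneg (hQoff : ∀ i j : Fin N, i ≠ j → 0 < Q i j) : ∀ i j : Fin N,
    0 ≤ (Q + (∑ l, |Q l l|) • (1 : Matrix (Fin N) (Fin N) ℝ)) i j := by
  intro i j
  have h : (Q + (∑ l, |Q l l|) • (1 : Matrix (Fin N) (Fin N) ℝ)) i j
      = Q i j + (∑ l, |Q l l|) * (1 : Matrix (Fin N) (Fin N) ℝ) i j := rfl
  rw [h]
  by_cases hij : i = j
  · subst hij
    rw [Matrix.one_apply_eq, mul_one]
    have h1 : |Q i i| ≤ ∑ l, |Q l l| :=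
      Finset.single_le_sum (f := fun l => |Q l l|) (fun l _ => abs_nonneg _) (Finset.mem_univ i)
    have := neg_abs_le (Q i i)
    linarith
  · rw [Matrix.one_apply_ne hij, mul_zero, add_zero]
    exact (hQoff i j hij).le

lemma Pm_entry_nonneg (hQoff : ∀ i j : Fin N, i ≠ j → 0 < Q i j) (t : ℝ) (ht : 0 ≤ t) (i j : Fin N) : 0 ≤ Pm Q t i j := by
  rw [Pm_decomp Q (∑ l, |Q l l|) t]
  have h : (Real.exp (-(t * ∑ l, |Q l l|)) •
      NormedSpace.exp (t • (Q + (∑ l, |Q l l|) • (1 : Matrix (Fin N) (Fin N) ℝ)))) i j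
      = Real.exp (-(t * ∑ l, |Q l l|)) *
        NormedSpace.exp (t • (Q + (∑ l, |Q l l|) • (1 : Matrix (Fin N) (Fin N) ℝ))) i j := rfl
  rw [h]
  refine mul_nonneg (Real.exp_nonneg _) (exp_entry_nonneg _ (fun i j => ?_) i j)
  have h2 : (t • (Q + (∑ l, |Q l l|) • (1 : Matrix (Fin N) (Fin N) ℝ))) i j
      = t * (Q + (∑ l, |Q l l|) • (1 : Matrix (Fin N) (Fin N) ℝ)) i j := rfl
  rw [h2]
  exact mul_nonneg ht (A_nonneg Q hQoff i j)

lemma Pm_one_entry_pos (hQoff : ∀ i j : Fin N, i ≠ j → 0 < Q i j) (i j : Fin N) : 0 < Pm Q 1 i j := by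
  set q : ℝ := ∑ l, |Q l l| with hq
  set A : Matrix (Fin N) (Fin N) ℝ := Q + q • (1 : Matrix (Fin N) (Fin N) ℝ) with hA
  have hAnn : ∀ i j, 0 ≤ A i j := A_nonneg Q hQoff
  have h1A : (1 : ℝ) • A = A := one_smul _ _
  rw [Pm_decomp Q q 1]
  have h : (Real.exp (-(1 * q)) • NormedSpace.exp ((1:ℝ) • A)) i j
      = Real.exp (-(1 * q)) * NormedSpace.exp ((1:ℝ) • A) i j := rfl
  rw [h, h1A]
  refine mul_pos (Real.exp_pos _) ?_
  by_cases hij : i = j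
  · subst hij
    have := exp_entry_ge A hAnn i i 0
    have h0 : ((Nat.factorial 0 : ℝ)⁻¹ • A ^ 0) i i = 1 := by
      simp [Matrix.one_apply]
    linarith [h0 ▸ this]
  · have := exp_entry_ge A hAnn i j 1
    have h1 : ((Nat.factorial 1 : ℝ)⁻¹ • A ^ 1) i j = A i j := by
      simp
    have hApos : 0 < A i j := by
      have : A i j = Q i j + q * (1 : Matrix (Fin N) (Fin N) ℝ) i j := rfl
      rw [this, Matrix.one_apply_ne hij, mul_zero, add_zero]
      exact hQoff i j hij
    linarith [h1 ▸ this]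

end Struct

lemma Pm_entry_continuous (Q : Matrix (Fin N) (Fin N) ℝ) (i j : Fin N) :
    Continuous fun t : ℝ => Pm Q t i j := by
  letI : SeminormedRing (Matrix (Fin N) (Fin N) ℝ) := Matrix.linftyOpSemiNormedRing
  letI : NormedRing (Matrix (Fin N) (Fin N) ℝ) := Matrix.linftyOpNormedRing
  letI : NormedAlgebra ℝ (Matrix (Fin N) (Fin N) ℝ) := Matrix.linftyOpNormedAlgebra
  letI : NormedAlgebra ℚ (Matrix (Fin N) (Fin N) ℝ) := Matrix.linftyOpNormedAlgebra
  exact ((exp_continuous (𝔸 := Matrix (Fin N) (Fin N) ℝ)).comp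
    (continuous_id.smul continuous_const)).matrix_elem i j

end CTMC

namespace CTMC
variable {N : ℕ}

lemma doeblin (A : Matrix (Fin N) (Fin N) ℝ) (δ : ℝ) (hδ : ∀ i j, δ ≤ A i j)
    (hrow : ∀ i, ∑ j, A i j = 1) (μ ν : Fin N → ℝ) (hsum : ∑ j, (μ j - ν j) = 0) :
    ∑ k, |∑ j, μ j * A j k - ∑ j, ν j * A j k|
      ≤ (1 - (N : ℝ) * δ) * ∑ j, |μ j - ν j| := by
  have key : ∀ k, ∑ j, μ j * A j k - ∑ j, ν j * A j k = ∑ j, (μ j - ν j) * (A j k - δ) := by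
    intro k
    have h1 : ∑ j, (μ j - ν j) * (A j k - δ)
        = (∑ j, (μ j - ν j) * A j k) - (∑ j, (μ j - ν j)) * δ := by
      rw [Finset.sum_mul, ← Finset.sum_sub_distrib]
      exact Finset.sum_congr rfl fun j _ => by ring
    rw [h1, hsum, zero_mul, sub_zero, ← Finset.sum_sub_distrib]
    exact Finset.sum_congr rfl fun j _ => by ring
  calc ∑ k, |∑ j, μ j * A j k - ∑ j, ν j * A j k|
      = ∑ k, |∑ j, (μ j - ν j) * (A j k - δ)| := by simp_rw [key]
    _ ≤ ∑ k, ∑ j, |μ j - ν j| * (A j k - δ) := by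
        refine Finset.sum_le_sum fun k _ => ?_
        refine (Finset.abs_sum_le_sum_abs _ _).trans (Finset.sum_le_sum fun j _ => ?_)
        rw [abs_mul, abs_of_nonneg (sub_nonneg.2 (hδ j k))]
    _ = ∑ j, |μ j - ν j| * (1 - (N : ℝ) * δ) := by
        rw [Finset.sum_comm]
        refine Finset.sum_congr rfl fun j _ => ?_
        rw [← Finset.mul_sum, Finset.sum_sub_distrib, hrow j, Finset.sum_const,
          Finset.card_univ, Fintype.card_fin, nsmul_eq_mul]
    _ = (1 - (N : ℝ) * δ) * ∑ j, |μ j - ν j| := by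
        rw [Finset.mul_sum]; exact Finset.sum_congr rfl fun j _ => by ring

lemma conv_bound (hN : 2 ≤ N) (Q : Matrix (Fin N) (Fin N) ℝ)
    (hQoff : ∀ i j : Fin N, i ≠ j → 0 < Q i j)
    (hQrow : ∀ i, ∑ j, Q i j = 0)
    (π : Fin N → ℝ) (hπnn : ∀ i, 0 ≤ π i) (hπsum : ∑ i, π i = 1)
    (hπQ : ∀ j, ∑ i, π i * Q i j = 0) :
    ∃ ρ : ℝ, 1/2 ≤ ρ ∧ ρ < 1 ∧
      ∀ t : ℝ, 0 ≤ t → ∀ i k : Fin N, |Pm Q t i k - π k| ≤ 4 * ρ ^ t := by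
  have hNpos : 0 < N := by omega
  haveI : NeZero N := ⟨by omega⟩
  set A : Matrix (Fin N) (Fin N) ℝ := Pm Q 1 with hA
  have hApos : ∀ i j, 0 < A i j := Pm_one_entry_pos Q hQoff
  have hArow : ∀ i, ∑ j, A i j = 1 := fun i => Pm_rowsum Q hQrow 1 i
  have hAπ : ∀ k, ∑ j, π j * A j k = π k := fun k => Pm_pi Q π hπQ 1 k
  -- minimal entry
  have hne : (Finset.univ : Finset (Fin N × Fin N)).Nonempty := ⟨(0, 0), Finset.mem_univ _⟩
  set δ : ℝ := Finset.univ.inf' hne fun p : Fin N × Fin N => A p.1 p.2 with hδdef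
  have hδpos : 0 < δ := by
    rw [hδdef, Finset.lt_inf'_iff]
    exact fun p _ => hApos p.1 p.2
  have hδle : ∀ i j, δ ≤ A i j := fun i j =>
    Finset.inf'_le _ (Finset.mem_univ (i, j))
  have hNδ : (N : ℝ) * δ ≤ 1 := by
    have : ∑ _j : Fin N, δ ≤ ∑ j, A 0 j := Finset.sum_le_sum fun j _ => hδle 0 j
    rw [hArow 0, Finset.sum_const, Finset.card_univ, Fintype.card_fin, nsmul_eq_mul] at this
    exact this
  set ρ : ℝ := max (1 - (N : ℝ) * δ) (1/2) with hρdef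
  have hρhalf : 1/2 ≤ ρ := le_max_right _ _
  have hρpos : 0 < ρ := lt_of_lt_of_le (by norm_num) hρhalf
  have hρlt : ρ < 1 := by
    refine max_lt ?_ (by norm_num)
    have : 0 < (N : ℝ) * δ := mul_pos (by positivity) hδpos
    linarith
  refine ⟨ρ, hρhalf, hρlt, ?_⟩
  -- iterated contraction
  have iter : ∀ (r : ℝ), 0 ≤ r → ∀ (m : ℕ) (i : Fin N),
      ∑ k, |Pm Q (r + m) i k - π k| ≤ 2 * ρ ^ m := by
    intro r hr m
    induction m with
    | zero =>
      intro i
      simp only [Nat.cast_zero, add_zero, pow_zero, mul_one]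
      calc ∑ k, |Pm Q r i k - π k| ≤ ∑ k, (Pm Q r i k + π k) := by
            refine Finset.sum_le_sum fun k _ => ?_
            have h1 := Pm_entry_nonneg Q hQoff r hr i k
            have h2 := hπnn k
            rw [abs_sub_comm]
            calc |π k - Pm Q r i k| ≤ |π k| + |Pm Q r i k| := abs_sub _ _
              _ = π k + Pm Q r i k := by rw [abs_of_nonneg h2, abs_of_nonneg h1]
              _ = Pm Q r i k + π k := by ring
        _ = 2 := by
            rw [Finset.sum_add_distrib, Pm_rowsum Q hQrow r i, hπsum]; norm_num
    | succ m ih =>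
      intro i
      have hcast : r + ((m + 1 : ℕ) : ℝ) = (r + m) + 1 := by push_cast; ring
      have hmul : ∀ k, Pm Q (r + ((m+1 : ℕ) : ℝ)) i k = ∑ j, Pm Q (r + m) i j * A j k := by
        intro k
        rw [hcast, Pm_add Q (r + m) 1]
        exact Matrix.mul_apply
      have hsum0 : ∑ j, ((fun j => Pm Q (r + m) i j) j - π j) = 0 := by
        rw [Finset.sum_sub_distrib, Pm_rowsum Q hQrow _ i, hπsum, sub_self]
      calc ∑ k, |Pm Q (r + ((m+1 : ℕ) : ℝ)) i k - π k|
          = ∑ k, |∑ j, Pm Q (r + m) i j * A j k - ∑ j, π j * A j k| := by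
            refine Finset.sum_congr rfl fun k _ => ?_
            rw [hmul k, hAπ k]
        _ ≤ (1 - (N : ℝ) * δ) * ∑ j, |Pm Q (r + m) i j - π j| :=
            doeblin A δ hδle hArow _ π hsum0
        _ ≤ ρ * ∑ j, |Pm Q (r + m) i j - π j| := by
            refine mul_le_mul_of_nonneg_right (le_max_left _ _) ?_
            exact Finset.sum_nonneg fun j _ => abs_nonneg _
        _ ≤ ρ * (2 * ρ ^ m) := mul_le_mul_of_nonneg_left (ih i) hρpos.le
        _ = 2 * ρ ^ (m + 1) := by ring
  -- conclude
  intro t ht i k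
  set m : ℕ := ⌊t⌋₊ with hm
  have hr : 0 ≤ t - m := sub_nonneg.2 (Nat.floor_le ht)
  have htm : t - 1 ≤ (m : ℝ) := by
    have := Nat.lt_floor_add_one t
    linarith
  have h1 : |Pm Q t i k - π k| ≤ ∑ k', |Pm Q t i k' - π k'| :=
    Finset.single_le_sum (f := fun k' => |Pm Q t i k' - π k'|)
      (fun k' _ => abs_nonneg _) (Finset.mem_univ k)
  have h2 : ∑ k', |Pm Q t i k' - π k'| ≤ 2 * ρ ^ m := by
    have := iter (t - m) hr m i
    rwa [sub_add_cancel] at this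
  have h3 : (ρ : ℝ) ^ m ≤ 2 * ρ ^ t := by
    have e1 : (ρ : ℝ) ^ m = ρ ^ (m : ℝ) := (Real.rpow_natCast ρ m).symm
    have e2 : ρ ^ (m : ℝ) ≤ ρ ^ (t - 1) :=
      Real.rpow_le_rpow_of_exponent_ge hρpos hρlt.le htm
    have e3 : ρ ^ (t - 1 : ℝ) = ρ ^ t / ρ := by
      rw [Real.rpow_sub hρpos, Real.rpow_one]
    have e4 : ρ ^ t / ρ ≤ 2 * ρ ^ t := by
      rw [div_le_iff₀ hρpos]
      have hρt : 0 < ρ ^ t := Real.rpow_pos_of_pos hρpos t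
      nlinarith
    rw [e1]; linarith [e2, e3 ▸ e2]
  calc |Pm Q t i k - π k| ≤ 2 * ρ ^ m := h1.trans h2
    _ ≤ 4 * ρ ^ t := by linarith
end CTMC



namespace CTMC


variable {Ω : Type*} [MeasurableSpace Ω] {N : ℕ}

lemma measurable_Z (Z : ℝ → Ω → Fin N) (hZmeas : Measurable fun p : ℝ × Ω => Z p.1 p.2)
    (t : ℝ) : Measurable (Z t) :=
  hZmeas.comp (measurable_const.prodMk measurable_id)

lemma filtZ_le (Z : ℝ → Ω → Fin N) (hZmeas : Measurable fun p : ℝ × Ω => Z p.1 p.2)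
    (s : ℝ) : filtZ Z s ≤ ‹MeasurableSpace Ω› := by
  refine iSup₂_le fun u _ => ?_
  exact (measurable_Z Z hZmeas u).comap_le

lemma measurableSet_filtZ (Z : ℝ → Ω → Fin N) {s u : ℝ} (hu : u ∈ Set.Icc (0 : ℝ) s)
    (k : Fin N) : MeasurableSet[filtZ Z s] {ω | Z u ω = k} := by
  have h1 : MeasurableSet[MeasurableSpace.comap (Z u) ⊤] {ω | Z u ω = k} :=
    ⟨{k}, trivial, rfl⟩
  exact (le_iSup₂ (f := fun (u : ℝ) (_ : u ∈ Set.Icc (0:ℝ) s) =>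
    MeasurableSpace.comap (Z u) (⊤ : MeasurableSpace (Fin N))) u hu) _ h1

variable (ℙ : Measure Ω) [IsProbabilityMeasure ℙ]
  (Q : Matrix (Fin N) (Fin N) ℝ) (Z : ℝ → Ω → Fin N)

lemma step (hZmeas : Measurable fun p : ℝ × Ω => Z p.1 p.2)
    (hMarkov : ∀ s t : ℝ, 0 ≤ s → s ≤ t → ∀ k : Fin N,
      MeasureTheory.condExp (filtZ Z s) ℙ (fun ω => if Z t ω = k then (1 : ℝ) else 0)
        =ᵐ[ℙ] fun ω => Pm Q (t - s) (Z s ω) k)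
    (s t : ℝ) (hs : 0 ≤ s) (hst : s ≤ t) (i' k : Fin N)
    (A : Set Ω) (hAm : MeasurableSet[filtZ Z s] A) (hAs : A ⊆ {ω | Z s ω = i'}) :
    (ℙ (A ∩ {ω | Z t ω = k})).toReal = (ℙ A).toReal * Pm Q (t - s) i' k := by
  have hle := filtZ_le Z hZmeas s
  have hAm0 : MeasurableSet A := hle _ hAm
  have hBt : MeasurableSet {ω | Z t ω = k} :=
    (measurable_Z Z hZmeas t) (MeasurableSet.singleton k) 
  have hint : Integrable (fun ω => if Z t ω = k then (1 : ℝ) else 0) ℙ := by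
    have : (fun ω => if Z t ω = k then (1 : ℝ) else 0)
        = Set.indicator {ω | Z t ω = k} (fun _ => (1 : ℝ)) := by
      ext ω; simp [Set.indicator_apply, Set.mem_setOf_eq]
    rw [this]
    exact (integrable_const (1 : ℝ)).indicator hBt
  have h1 : ∫ ω in A, (if Z t ω = k then (1 : ℝ) else 0) ∂ℙ
      = ∫ ω in A, (MeasureTheory.condExp (filtZ Z s) ℙ
          (fun ω => if Z t ω = k then (1 : ℝ) else 0)) ω ∂ℙ :=
    (setIntegral_condExp hle hint hAm).symm
  have h2 : ∫ ω in A, (MeasureTheory.condExp (filtZ Z s) ℙ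
          (fun ω => if Z t ω = k then (1 : ℝ) else 0)) ω ∂ℙ
      = ∫ ω in A, Pm Q (t - s) (Z s ω) k ∂ℙ :=
    setIntegral_congr_ae hAm0 ((hMarkov s t hs hst k).mono fun ω hω _ => hω)
  have h3 : ∫ ω in A, Pm Q (t - s) (Z s ω) k ∂ℙ
      = ∫ ω in A, Pm Q (t - s) i' k ∂ℙ :=
    setIntegral_congr_fun hAm0 fun ω hω => by
      have : Z s ω = i' := hAs hω
      rw [this]
  have h4 : ∫ ω in A, Pm Q (t - s) i' k ∂ℙ = (ℙ A).toReal * Pm Q (t - s) i' k := by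
    rw [setIntegral_const, smul_eq_mul]; rfl
  have h5 : ∫ ω in A, (if Z t ω = k then (1 : ℝ) else 0) ∂ℙ
      = (ℙ (A ∩ {ω | Z t ω = k})).toReal := by
    have e : (fun ω => if Z t ω = k then (1 : ℝ) else 0)
        = Set.indicator {ω | Z t ω = k} (fun _ => (1 : ℝ)) := by
      ext ω; simp [Set.indicator_apply, Set.mem_setOf_eq]
    rw [e, setIntegral_indicator hBt, setIntegral_const, smul_eq_mul, mul_one]; rfl
  rw [← h5, h1, h2, h3, h4]

variable (hZmeas : Measurable fun p : ℝ × Ω => Z p.1 p.2)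
  (hMarkov : ∀ s t : ℝ, 0 ≤ s → s ≤ t → ∀ k : Fin N,
      MeasureTheory.condExp (filtZ Z s) ℙ (fun ω => if Z t ω = k then (1 : ℝ) else 0)
        =ᵐ[ℙ] fun ω => Pm Q (t - s) (Z s ω) k)
  (π : Fin N → ℝ)

include hZmeas hMarkov

lemma prob_eq (hπnn : ∀ k, 0 ≤ π k)
    (hZ0 : ∀ k, ℙ {ω | Z 0 ω = k} = ENNReal.ofReal (π k))
    (hstat : ∀ (t : ℝ) (k : Fin N), ∑ j, π j * Pm Q t j k = π k)
    (s : ℝ) (hs : 0 ≤ s) (i : Fin N) :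
    (ℙ {ω | Z s ω = i}).toReal = π i := by
  have key : ∀ k, (ℙ ({ω | Z 0 ω = k} ∩ {ω | Z s ω = i})).toReal = π k * Pm Q s k i := by
    intro k
    have h := step ℙ Q Z hZmeas hMarkov 0 s le_rfl hs k i {ω | Z 0 ω = k}
      (measurableSet_filtZ Z ⟨le_rfl, le_rfl⟩ k) (fun ω hω => hω)
    rw [sub_zero] at h
    rw [h, hZ0 k, ENNReal.toReal_ofReal (hπnn k)]
  have hunion : {ω | Z s ω = i} = ⋃ k, ({ω | Z 0 ω = k} ∩ {ω | Z s ω = i}) := by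
    ext ω; simp
  have hmeas : ∀ k : Fin N, MeasurableSet ({ω | Z 0 ω = k} ∩ {ω | Z s ω = i}) := fun k =>
    ((measurable_Z Z hZmeas 0) (MeasurableSet.singleton k)).inter
      ((measurable_Z Z hZmeas s) (MeasurableSet.singleton i))
  have hdisj : Pairwise (Function.onFun Disjoint
      fun k => ({ω | Z 0 ω = k} ∩ {ω | Z s ω = i})) := by
    intro k k' hkk'
    refine Set.disjoint_left.2 fun ω hω hω' => ?_
    exact hkk' (hω.1.symm.trans hω'.1)
  have : ℙ {ω | Z s ω = i} = ∑ k, ℙ ({ω | Z 0 ω = k} ∩ {ω | Z s ω = i}) := by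
    conv_lhs => rw [hunion]
    rw [measure_iUnion hdisj hmeas, tsum_fintype]
  rw [this, ENNReal.toReal_sum (fun k _ => measure_ne_top ℙ _)]
  rw [Finset.sum_congr rfl fun k _ => key k]
  exact hstat s i

lemma prob_two (hπnn : ∀ k, 0 ≤ π k)
    (hZ0 : ∀ k, ℙ {ω | Z 0 ω = k} = ENNReal.ofReal (π k))
    (hstat : ∀ (t : ℝ) (k : Fin N), ∑ j, π j * Pm Q t j k = π k)
    (a b : ℝ) (ha : 0 ≤ a) (hab : a ≤ b) (i : Fin N) :
    (ℙ ({ω | Z a ω = i} ∩ {ω | Z b ω = i})).toReal = π i * Pm Q (b - a) i i := by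
  rw [step ℙ Q Z hZmeas hMarkov a b ha hab i i {ω | Z a ω = i}
    (measurableSet_filtZ Z ⟨ha, le_rfl⟩ i) (fun ω hω => hω),
    prob_eq ℙ Q Z hZmeas hMarkov π hπnn hZ0 hstat a ha i]

lemma prob_four (hπnn : ∀ k, 0 ≤ π k)
    (hZ0 : ∀ k, ℙ {ω | Z 0 ω = k} = ENNReal.ofReal (π k))
    (hstat : ∀ (t : ℝ) (k : Fin N), ∑ j, π j * Pm Q t j k = π k)
    (a b c d : ℝ) (ha : 0 ≤ a) (hab : a ≤ b) (hbc : b ≤ c) (hcd : c ≤ d) (i : Fin N) :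
    (ℙ ((({ω | Z a ω = i} ∩ {ω | Z b ω = i}) ∩ {ω | Z c ω = i}) ∩ {ω | Z d ω = i})).toReal
      = π i * Pm Q (b - a) i i * Pm Q (c - b) i i * Pm Q (d - c) i i := by
  have hb : (0 : ℝ) ≤ b := ha.trans hab
  have hc : (0 : ℝ) ≤ c := hb.trans hbc
  have m3 : MeasurableSet[filtZ Z c] (({ω | Z a ω = i} ∩ {ω | Z b ω = i}) ∩ {ω | Z c ω = i}) :=
    (((measurableSet_filtZ Z ⟨ha, hab.trans hbc⟩ i).inter
      (measurableSet_filtZ Z ⟨hb, hbc⟩ i)).inter (measurableSet_filtZ Z ⟨hc, le_rfl⟩ i))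
  have m2 : MeasurableSet[filtZ Z b] ({ω | Z a ω = i} ∩ {ω | Z b ω = i}) :=
    ((measurableSet_filtZ Z ⟨ha, hab⟩ i).inter (measurableSet_filtZ Z ⟨hb, le_rfl⟩ i))
  rw [step ℙ Q Z hZmeas hMarkov c d hc hcd i i _ m3 (fun ω hω => hω.2),
    step ℙ Q Z hZmeas hMarkov b c hb hbc i i _ m2 (fun ω hω => hω.2),
    prob_two ℙ Q Z hZmeas hMarkov π hπnn hZ0 hstat a b ha hab i]

omit hMarkov hZmeas

lemma ind_prod_two (a b : ℝ) (i : Fin N) :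
    (fun ω => (if Z a ω = i then (1:ℝ) else 0) * (if Z b ω = i then (1:ℝ) else 0))
      = Set.indicator ({ω | Z a ω = i} ∩ {ω | Z b ω = i}) (fun _ => (1:ℝ)) := by
  ext ω
  by_cases h1 : Z a ω = i <;> by_cases h2 : Z b ω = i <;>
    simp [Set.indicator_apply, Set.mem_setOf_eq, h1, h2]

lemma ind_prod_four (a b c d : ℝ) (i : Fin N) :
    (fun ω => ((if Z a ω = i then (1:ℝ) else 0) * (if Z b ω = i then (1:ℝ) else 0)) *
        ((if Z c ω = i then (1:ℝ) else 0) * (if Z d ω = i then (1:ℝ) else 0)))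
      = Set.indicator ((({ω | Z a ω = i} ∩ {ω | Z b ω = i}) ∩ {ω | Z c ω = i})
          ∩ {ω | Z d ω = i}) (fun _ => (1:ℝ)) := by
  ext ω
  by_cases h1 : Z a ω = i <;> by_cases h2 : Z b ω = i <;> by_cases h3 : Z c ω = i <;>
    by_cases h4 : Z d ω = i <;>
    simp [Set.indicator_apply, Set.mem_setOf_eq, h1, h2, h3, h4]

include hZmeas

lemma measurableSet_E (a : ℝ) (i : Fin N) : MeasurableSet {ω | Z a ω = i} :=
  (measurable_Z Z hZmeas a) (MeasurableSet.singleton i)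

lemma integrable_ind_two (a b : ℝ) (i : Fin N) :
    Integrable (fun ω => (if Z a ω = i then (1:ℝ) else 0)
      * (if Z b ω = i then (1:ℝ) else 0)) ℙ := by
  rw [ind_prod_two]
  exact (integrable_const (1 : ℝ)).indicator
    ((measurableSet_E Z hZmeas a i).inter (measurableSet_E Z hZmeas b i))

lemma integrable_ind_four (a b c d : ℝ) (i : Fin N) :
    Integrable (fun ω => ((if Z a ω = i then (1:ℝ) else 0) * (if Z b ω = i then (1:ℝ) else 0)) *
        ((if Z c ω = i then (1:ℝ) else 0) * (if Z d ω = i then (1:ℝ) else 0))) ℙ := by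
  rw [ind_prod_four]
  exact (integrable_const (1 : ℝ)).indicator
    ((((measurableSet_E Z hZmeas a i).inter (measurableSet_E Z hZmeas b i)).inter
      (measurableSet_E Z hZmeas c i)).inter (measurableSet_E Z hZmeas d i))

lemma integral_ind_two (a b : ℝ) (i : Fin N) :
    ∫ ω, (if Z a ω = i then (1:ℝ) else 0) * (if Z b ω = i then (1:ℝ) else 0) ∂ℙ
      = (ℙ ({ω | Z a ω = i} ∩ {ω | Z b ω = i})).toReal := by
  rw [ind_prod_two, integral_indicator_const, smul_eq_mul, mul_one]
  exacts [rfl, (measurableSet_E Z hZmeas a i).inter (measurableSet_E Z hZmeas b i)]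

lemma integral_ind_four (a b c d : ℝ) (i : Fin N) :
    ∫ ω, ((if Z a ω = i then (1:ℝ) else 0) * (if Z b ω = i then (1:ℝ) else 0)) *
        ((if Z c ω = i then (1:ℝ) else 0) * (if Z d ω = i then (1:ℝ) else 0)) ∂ℙ
      = (ℙ ((({ω | Z a ω = i} ∩ {ω | Z b ω = i}) ∩ {ω | Z c ω = i})
          ∩ {ω | Z d ω = i})).toReal := by
  rw [ind_prod_four, integral_indicator_const, smul_eq_mul, mul_one]
  exacts [rfl, (((measurableSet_E Z hZmeas a i).inter (measurableSet_E Z hZmeas b i)).inter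
      (measurableSet_E Z hZmeas c i)).inter (measurableSet_E Z hZmeas d i)]

end CTMC

namespace CTMC

lemma geom_bound (r : ℝ) (h0 : 0 ≤ r) (h1 : r < 1) (n : ℕ) :
    ∑ m ∈ Finset.range n, r ^ m ≤ 1 / (1 - r) := by
  have hr : 0 < 1 - r := by linarith
  rw [geom_sum_eq (by intro hc; rw [hc] at h1; exact lt_irrefl 1 h1 : r ≠ 1)]
  have key : (r ^ n - 1) / (r - 1) = (1 - r ^ n) / (1 - r) := by
    rw [show (1 - r ^ n) = -(r ^ n - 1) by ring, show (1 - r) = -(r - 1) by ring,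
      neg_div_neg_eq]
  rw [key]
  have hrn : 0 ≤ r ^ n := pow_nonneg h0 n
  gcongr
  linarith

lemma double_sum_bound (n : ℕ) (g : ℕ → ℕ → ℝ) (r : ℝ) (h0 : 0 ≤ r) (h1 : r < 1)
    (hdiag : ∀ j ∈ Finset.Icc 1 n, |g j j| ≤ 2)
    (hoff : ∀ j k, j ∈ Finset.Icc 1 n → k ∈ Finset.Icc 1 n → j ≠ k →
      |g j k| ≤ 4 * r ^ (max j k - min j k - 1)) :
    |∑ j ∈ Finset.Icc 1 n, ∑ k ∈ Finset.Icc 1 n, g j k|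
      ≤ n * (2 + 8 * (1 / (1 - r))) := by
  have hgeom := geom_bound r h0 h1 n
  calc |∑ j ∈ Finset.Icc 1 n, ∑ k ∈ Finset.Icc 1 n, g j k|
      ≤ ∑ j ∈ Finset.Icc 1 n, |∑ k ∈ Finset.Icc 1 n, g j k| :=
        Finset.abs_sum_le_sum_abs _ _
    _ ≤ ∑ j ∈ Finset.Icc 1 n, (2 + 8 * (1 / (1 - r))) := by
        refine Finset.sum_le_sum fun j hj => ?_
        refine (Finset.abs_sum_le_sum_abs _ _).trans ?_
        -- split off the diagonal
        rw [← Finset.add_sum_erase _ _ hj]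
        have hoffsum : ∑ k ∈ (Finset.Icc 1 n).erase j, |g j k| ≤ 8 * (1 / (1 - r)) := by
          have hsplit : (Finset.Icc 1 n).erase j
              = ((Finset.Icc 1 n).filter (fun k => k < j))
                ∪ ((Finset.Icc 1 n).filter (fun k => j < k)) := by
            ext k
            simp only [Finset.mem_erase, Finset.mem_union, Finset.mem_filter, Finset.mem_Icc]
            omega
          have hdisj : Disjoint ((Finset.Icc 1 n).filter (fun k => k < j))
              ((Finset.Icc 1 n).filter (fun k => j < k)) := by
            refine Finset.disjoint_left.2 fun k hk hk' => ?_
            simp only [Finset.mem_filter] at hk hk'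
            omega
          rw [hsplit, Finset.sum_union hdisj]
          have hb1 : ∑ k ∈ (Finset.Icc 1 n).filter (fun k => k < j), |g j k|
              ≤ 4 * (1 / (1 - r)) := by
            have hle : ∑ k ∈ (Finset.Icc 1 n).filter (fun k => k < j), |g j k|
                ≤ ∑ k ∈ (Finset.Icc 1 n).filter (fun k => k < j), 4 * r ^ (j - k - 1) := by
              refine Finset.sum_le_sum fun k hk => ?_
              simp only [Finset.mem_filter] at hk
              have := hoff j k hj hk.1 (by omega)
              have hmax : max j k = j := by omega
              have hmin : min j k = k := by omega
              rwa [hmax, hmin] at this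
            refine hle.trans ?_
            have himg : ∑ k ∈ (Finset.Icc 1 n).filter (fun k => k < j), 4 * r ^ (j - k - 1)
                = ∑ m ∈ ((Finset.Icc 1 n).filter (fun k => k < j)).image (fun k => j - k - 1),
                    4 * r ^ m := by
              rw [Finset.sum_image]
              intro x hx y hy hxy
              simp only [Finset.coe_filter, Finset.mem_coe, Set.mem_setOf_eq, Finset.mem_filter, Finset.mem_Icc] at hx hy hxy
              omega
            rw [himg]
            have hsub : ((Finset.Icc 1 n).filter (fun k => k < j)).image (fun k => j - k - 1)
                ⊆ Finset.range n := by
              intro m hm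
              simp only [Finset.mem_image, Finset.mem_filter, Finset.mem_Icc] at hm
              obtain ⟨k, ⟨⟨hk1, hkn⟩, hkj⟩, rfl⟩ := hm
              simp only [Finset.mem_range]
              have hjn : j ≤ n := (Finset.mem_Icc.1 hj).2
              omega
            calc ∑ m ∈ ((Finset.Icc 1 n).filter (fun k => k < j)).image (fun k => j - k - 1),
                  4 * r ^ m
                ≤ ∑ m ∈ Finset.range n, 4 * r ^ m := by
                  refine Finset.sum_le_sum_of_subset_of_nonneg hsub fun m _ _ => ?_
                  positivity
              _ = 4 * ∑ m ∈ Finset.range n, r ^ m := by rw [Finset.mul_sum]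
              _ ≤ 4 * (1 / (1 - r)) := by
                  refine mul_le_mul_of_nonneg_left hgeom (by norm_num)
          have hb2 : ∑ k ∈ (Finset.Icc 1 n).filter (fun k => j < k), |g j k|
              ≤ 4 * (1 / (1 - r)) := by
            have hle : ∑ k ∈ (Finset.Icc 1 n).filter (fun k => j < k), |g j k|
                ≤ ∑ k ∈ (Finset.Icc 1 n).filter (fun k => j < k), 4 * r ^ (k - j - 1) := by
              refine Finset.sum_le_sum fun k hk => ?_
              simp only [Finset.mem_filter] at hk
              have := hoff j k hj hk.1 (by omega)
              have hmax : max j k = k := by omega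
              have hmin : min j k = j := by omega
              rwa [hmax, hmin] at this
            refine hle.trans ?_
            have himg : ∑ k ∈ (Finset.Icc 1 n).filter (fun k => j < k), 4 * r ^ (k - j - 1)
                = ∑ m ∈ ((Finset.Icc 1 n).filter (fun k => j < k)).image (fun k => k - j - 1),
                    4 * r ^ m := by
              rw [Finset.sum_image]
              intro x hx y hy hxy
              simp only [Finset.coe_filter, Finset.mem_coe, Set.mem_setOf_eq, Finset.mem_filter, Finset.mem_Icc] at hx hy hxy
              omega
            rw [himg]
            have hsub : ((Finset.Icc 1 n).filter (fun k => j < k)).image (fun k => k - j - 1)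
                ⊆ Finset.range n := by
              intro m hm
              simp only [Finset.mem_image, Finset.mem_filter, Finset.mem_Icc] at hm
              obtain ⟨k, ⟨⟨hk1, hkn⟩, hkj⟩, rfl⟩ := hm
              simp only [Finset.mem_range]
              omega
            calc ∑ m ∈ ((Finset.Icc 1 n).filter (fun k => j < k)).image (fun k => k - j - 1),
                  4 * r ^ m
                ≤ ∑ m ∈ Finset.range n, 4 * r ^ m := by
                  refine Finset.sum_le_sum_of_subset_of_nonneg hsub fun m _ _ => ?_
                  positivity
              _ = 4 * ∑ m ∈ Finset.range n, r ^ m := by rw [Finset.mul_sum]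
              _ ≤ 4 * (1 / (1 - r)) := by
                  refine mul_le_mul_of_nonneg_left hgeom (by norm_num)
          linarith
        have := hdiag j hj
        linarith
    _ = n * (2 + 8 * (1 / (1 - r))) := by
        rw [Finset.sum_const, Nat.card_Icc]
        simp only [nsmul_eq_mul, Nat.add_sub_cancel]

variable {Ω : Type*} [MeasurableSpace Ω]

lemma tendstoInMeasure_of_sq (ℙ : Measure Ω) [IsProbabilityMeasure ℙ]
    (F : ℕ → Ω → ℝ) (c : ℝ)
    (hint : ∀ n, Integrable (fun ω => (F n ω - c) ^ 2) ℙ)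
    (hV : Tendsto (fun n => ∫ ω, (F n ω - c) ^ 2 ∂ℙ) atTop (nhds 0)) :
    TendstoInMeasure ℙ F atTop (fun _ => c) := by
  rw [tendstoInMeasure_iff_dist]
  intro ε hε
  have hle : ∀ n, ℙ { x | ε ≤ dist (F n x) c }
      ≤ ENNReal.ofReal ((∫ ω, (F n ω - c) ^ 2 ∂ℙ) / ε ^ 2) := by
    intro n
    have hset : { x | ε ≤ dist (F n x) c } = { x | ε ^ 2 ≤ (F n x - c) ^ 2 } := by
      ext x
      simp only [Set.mem_setOf_eq, Real.dist_eq]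
      constructor
      · intro hx
        calc ε ^ 2 ≤ |F n x - c| ^ 2 := by
              exact pow_le_pow_left₀ hε.le hx 2
          _ = (F n x - c) ^ 2 := sq_abs _
      · intro hx
        by_contra hcon
        push_neg at hcon
        have h1 : |F n x - c| < ε := hcon
        have h2 : (F n x - c) ^ 2 < ε ^ 2 := by
          rw [← sq_abs]
          exact pow_lt_pow_left₀ h1 (abs_nonneg _) (by norm_num)
        linarith
    have hmark := mul_meas_ge_le_integral_of_nonneg
      (ae_of_all ℙ fun ω => sq_nonneg (F n ω - c)) (hint n) (ε ^ 2)
    have hε2 : 0 < ε ^ 2 := by positivity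
    have htoReal : (ℙ { x | ε ^ 2 ≤ (F n x - c) ^ 2 }).toReal
        ≤ (∫ ω, (F n ω - c) ^ 2 ∂ℙ) / ε ^ 2 := by
      rw [le_div_iff₀ hε2]
      rw [mul_comm]; exact hmark
    rw [hset]
    calc ℙ { x | ε ^ 2 ≤ (F n x - c) ^ 2 }
        = ENNReal.ofReal ((ℙ { x | ε ^ 2 ≤ (F n x - c) ^ 2 }).toReal) :=
          (ENNReal.ofReal_toReal (measure_ne_top ℙ _)).symm
      _ ≤ ENNReal.ofReal ((∫ ω, (F n ω - c) ^ 2 ∂ℙ) / ε ^ 2) :=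
          ENNReal.ofReal_le_ofReal htoReal
  have hof : Tendsto (fun n => ENNReal.ofReal ((∫ ω, (F n ω - c) ^ 2 ∂ℙ) / ε ^ 2))
      atTop (nhds 0) := by
    have : Tendsto (fun n => (∫ ω, (F n ω - c) ^ 2 ∂ℙ) / ε ^ 2) atTop (nhds 0) := by
      have := hV.div_const (ε ^ 2)
      simpa using this
    have h2 := (ENNReal.continuous_ofReal.tendsto 0).comp this
    simpa [Function.comp_def] using h2
  exact tendsto_of_tendsto_of_tendsto_of_le_of_le tendsto_const_nhds hof
    (fun n => bot_le) hle

end CTMC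
end Aux
theorem stmt9 {Ω : Type*} [MeasurableSpace Ω] (ℙ : Measure Ω) [IsProbabilityMeasure ℙ]
    (N : ℕ) (hN : 2 ≤ N)
    (Q : Matrix (Fin N) (Fin N) ℝ)
    (hQoff : ∀ i j : Fin N, i ≠ j → 0 < Q i j)
    (hQdiag : ∀ i : Fin N, Q i i = -∑ j ∈ Finset.univ.erase i, Q i j)
    (π : Fin N → ℝ)
    (hπnn : ∀ i, 0 ≤ π i) (hπsum : ∑ i, π i = 1)
    (hπQ : ∀ j, ∑ i, π i * Q i j = 0)
    (hπuniq : ∀ π' : Fin N → ℝ, (∀ i, 0 ≤ π' i) → (∑ i, π' i = 1) →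
      (∀ j, ∑ i, π' i * Q i j = 0) → π' = π)
    (Z : ℝ → Ω → Fin N)
    (hZmeas : Measurable fun p : ℝ × Ω => Z p.1 p.2)
    (hZ0 : ∀ i, ℙ {ω | Z 0 ω = i} = ENNReal.ofReal (π i))
    (hMarkov : ∀ s t : ℝ, 0 ≤ s → s ≤ t → ∀ k : Fin N,
      MeasureTheory.condExp (filtZ Z s) ℙ (fun ω => if Z t ω = k then (1 : ℝ) else 0)
        =ᵐ[ℙ] fun ω => NormedSpace.exp ((t - s) • Q) (Z s ω) k)
    (h : ℕ → ℝ) (hhpos : ∀ n, 0 < h n)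
    (hh0 : Tendsto h atTop (nhds 0))
    (hnh : Tendsto (fun n : ℕ => (n : ℝ) * h n) atTop atTop) :
    -- `(1/n) K_{ii}(n)` converges to `π_i` in probability.
    ∀ i : Fin N,
      TendstoInMeasure ℙ
        (fun (n : ℕ) (ω : Ω) =>
          (1 / (n : ℝ)) *
            ∑ j ∈ Finset.Icc 1 n,
              (if Z (((j : ℝ) - 1) * h n) ω = i then (1 : ℝ) else 0) *
                (if Z ((j : ℝ) * h n) ω = i then (1 : ℝ) else 0))
        atTop (fun _ => π i) := by
  intro i
  classical
  -- matrix-side facts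
  have hQrow : ∀ l, ∑ j, Q l j = 0 := by
    intro l
    have h2 : ∑ j ∈ Finset.univ.erase l, Q l j + Q l l = ∑ j, Q l j :=
      Finset.sum_erase_add _ _ (Finset.mem_univ l)
    rw [hQdiag l] at h2
    linarith [h2]
  have hstat : ∀ (t : ℝ) (k : Fin N), ∑ j, π j * CTMC.Pm Q t j k = π k :=
    fun t k => CTMC.Pm_pi Q π hπQ t k
  obtain ⟨ρ, hρhalf, hρlt, hconv⟩ := CTMC.conv_bound hN Q hQoff hQrow π hπnn hπsum hπQ
  have hρpos : (0:ℝ) < ρ := by linarith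
  have hMarkov' : ∀ s t : ℝ, 0 ≤ s → s ≤ t → ∀ k : Fin N,
      MeasureTheory.condExp (filtZ Z s) ℙ (fun ω => if Z t ω = k then (1 : ℝ) else 0)
        =ᵐ[ℙ] fun ω => CTMC.Pm Q (t - s) (Z s ω) k := hMarkov
  have hπi0 : 0 ≤ π i := hπnn i
  have hπi1 : π i ≤ 1 := by
    rw [← hπsum]
    exact Finset.single_le_sum (f := fun k => π k) (fun k _ => hπnn k) (Finset.mem_univ i)
  have hP0 : ∀ t : ℝ, 0 ≤ t → 0 ≤ CTMC.Pm Q t i i := fun t ht =>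
    CTMC.Pm_entry_nonneg Q hQoff t ht i i
  have hP1 : ∀ t : ℝ, 0 ≤ t → CTMC.Pm Q t i i ≤ 1 := by
    intro t ht
    rw [← CTMC.Pm_rowsum Q hQrow t i]
    exact Finset.single_le_sum (f := fun k => CTMC.Pm Q t i k)
      (fun k _ => CTMC.Pm_entry_nonneg Q hQoff t ht i k) (Finset.mem_univ i)
  -- notation
  set F : ℕ → Ω → ℝ := fun n ω => (1 / (n : ℝ)) * ∑ j ∈ Finset.Icc 1 n,
      (if Z (((j : ℝ) - 1) * h n) ω = i then (1:ℝ) else 0) *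
        (if Z ((j : ℝ) * h n) ω = i then (1:ℝ) else 0) with hFdef
  -- expectations of single terms
  have hEX : ∀ n : ℕ, ∀ j ∈ Finset.Icc 1 n,
      ∫ ω, (if Z (((j:ℝ)-1) * h n) ω = i then (1:ℝ) else 0) *
        (if Z ((j:ℝ) * h n) ω = i then (1:ℝ) else 0) ∂ℙ
      = π i * CTMC.Pm Q (h n) i i := by
    intro n j hj
    obtain ⟨hj1, hjn⟩ := Finset.mem_Icc.1 hj
    have hj1' : (1:ℝ) ≤ (j:ℝ) := by exact_mod_cast hj1
    have ha : 0 ≤ ((j:ℝ)-1) * h n := mul_nonneg (by linarith) (hhpos n).le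
    have hab : ((j:ℝ)-1) * h n ≤ (j:ℝ) * h n :=
      mul_le_mul_of_nonneg_right (by linarith) (hhpos n).le
    rw [CTMC.integral_ind_two ℙ Z hZmeas _ _ i,
      CTMC.prob_two ℙ Q Z hZmeas hMarkov' π hπnn hZ0 hstat _ _ ha hab i]
    have harg : (j:ℝ) * h n - ((j:ℝ)-1) * h n = h n := by ring
    rw [harg]
  -- diagonal second moments
  have hEXdiag : ∀ n : ℕ, ∀ j ∈ Finset.Icc 1 n,
      ∫ ω, ((if Z (((j:ℝ)-1) * h n) ω = i then (1:ℝ) else 0) *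
            (if Z ((j:ℝ) * h n) ω = i then (1:ℝ) else 0)) *
           ((if Z (((j:ℝ)-1) * h n) ω = i then (1:ℝ) else 0) *
            (if Z ((j:ℝ) * h n) ω = i then (1:ℝ) else 0)) ∂ℙ
      = π i * CTMC.Pm Q (h n) i i := by
    intro n j hj
    have hptw : (fun ω => ((if Z (((j:ℝ)-1) * h n) ω = i then (1:ℝ) else 0) *
            (if Z ((j:ℝ) * h n) ω = i then (1:ℝ) else 0)) *
           ((if Z (((j:ℝ)-1) * h n) ω = i then (1:ℝ) else 0) *
            (if Z ((j:ℝ) * h n) ω = i then (1:ℝ) else 0)))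
        = fun ω => (if Z (((j:ℝ)-1) * h n) ω = i then (1:ℝ) else 0) *
            (if Z ((j:ℝ) * h n) ω = i then (1:ℝ) else 0) := by
      funext ω
      by_cases h1 : Z (((j:ℝ)-1) * h n) ω = i <;> by_cases h2 : Z ((j:ℝ) * h n) ω = i <;>
        simp [h1, h2]
    rw [hptw]
    exact hEX n j hj
  -- off-diagonal second moments (ordered)
  have hEXX : ∀ n : ℕ, ∀ j k : ℕ, j ∈ Finset.Icc 1 n → k ∈ Finset.Icc 1 n → j < k →
      ∫ ω, ((if Z (((j:ℝ)-1) * h n) ω = i then (1:ℝ) else 0) *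
            (if Z ((j:ℝ) * h n) ω = i then (1:ℝ) else 0)) *
           ((if Z (((k:ℝ)-1) * h n) ω = i then (1:ℝ) else 0) *
            (if Z ((k:ℝ) * h n) ω = i then (1:ℝ) else 0)) ∂ℙ
      = π i * CTMC.Pm Q (h n) i i * CTMC.Pm Q (((k:ℝ)-1-(j:ℝ)) * h n) i i
          * CTMC.Pm Q (h n) i i := by
    intro n j k hj hk hjk
    obtain ⟨hj1, hjn⟩ := Finset.mem_Icc.1 hj
    obtain ⟨hk1, hkn⟩ := Finset.mem_Icc.1 hk
    have hj1' : (1:ℝ) ≤ (j:ℝ) := by exact_mod_cast hj1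
    have hjk' : (j:ℝ) + 1 ≤ (k:ℝ) := by exact_mod_cast hjk
    have hh := (hhpos n).le
    have ha : 0 ≤ ((j:ℝ)-1) * h n := mul_nonneg (by linarith) hh
    have hab : ((j:ℝ)-1) * h n ≤ (j:ℝ) * h n :=
      mul_le_mul_of_nonneg_right (by linarith) hh
    have hbc : (j:ℝ) * h n ≤ ((k:ℝ)-1) * h n :=
      mul_le_mul_of_nonneg_right (by linarith) hh
    have hcd : ((k:ℝ)-1) * h n ≤ (k:ℝ) * h n :=
      mul_le_mul_of_nonneg_right (by linarith) hh
    rw [CTMC.integral_ind_four ℙ Z hZmeas _ _ _ _ i,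
      CTMC.prob_four ℙ Q Z hZmeas hMarkov' π hπnn hZ0 hstat _ _ _ _ ha hab hbc hcd i]
    have e1 : (j:ℝ) * h n - ((j:ℝ)-1) * h n = h n := by ring
    have e2 : ((k:ℝ)-1) * h n - (j:ℝ) * h n = ((k:ℝ)-1-(j:ℝ)) * h n := by ring
    have e3 : (k:ℝ) * h n - ((k:ℝ)-1) * h n = h n := by ring
    rw [e1, e2, e3]
  -- integrability
  have hintX : ∀ (n j : ℕ), Integrable (fun ω =>
      (if Z (((j:ℝ)-1) * h n) ω = i then (1:ℝ) else 0) *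
      (if Z ((j:ℝ) * h n) ω = i then (1:ℝ) else 0)) ℙ :=
    fun n j => CTMC.integrable_ind_two ℙ Z hZmeas _ _ i
  have hintXX : ∀ (n j k : ℕ), Integrable (fun ω =>
      ((if Z (((j:ℝ)-1) * h n) ω = i then (1:ℝ) else 0) *
       (if Z ((j:ℝ) * h n) ω = i then (1:ℝ) else 0)) *
      ((if Z (((k:ℝ)-1) * h n) ω = i then (1:ℝ) else 0) *
       (if Z ((k:ℝ) * h n) ω = i then (1:ℝ) else 0))) ℙ :=
    fun n j k => CTMC.integrable_ind_four ℙ Z hZmeas _ _ _ _ i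
  have hintF : ∀ n, Integrable (F n) ℙ := by
    intro n
    exact (integrable_finset_sum _ (fun j _ => hintX n j)).const_mul _
  have hFsq : ∀ n, (fun ω => (F n ω)^2) = fun ω => (1/(n:ℝ))^2 *
      ∑ j ∈ Finset.Icc 1 n, ∑ k ∈ Finset.Icc 1 n,
        (((if Z (((j:ℝ)-1) * h n) ω = i then (1:ℝ) else 0) *
          (if Z ((j:ℝ) * h n) ω = i then (1:ℝ) else 0)) *
         ((if Z (((k:ℝ)-1) * h n) ω = i then (1:ℝ) else 0) *
          (if Z ((k:ℝ) * h n) ω = i then (1:ℝ) else 0))) := by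
    intro n
    funext ω
    simp only [hFdef]
    rw [pow_two, mul_mul_mul_comm, Finset.sum_mul_sum, ← pow_two]
  have hintF2 : ∀ n, Integrable (fun ω => (F n ω)^2) ℙ := by
    intro n
    rw [hFsq n]
    exact ((integrable_finset_sum _ (fun j _ =>
      integrable_finset_sum _ (fun k _ => hintXX n j k))).const_mul _)
  have hintegralF : ∀ n : ℕ, 1 ≤ n → ∫ ω, F n ω ∂ℙ = π i * CTMC.Pm Q (h n) i i := by
    intro n hn
    have hn0 : ((n:ℝ)) ≠ 0 := by
      have : (0:ℝ) < (n:ℝ) := by exact_mod_cast Nat.lt_of_lt_of_le Nat.zero_lt_one hn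
      linarith
    simp only [hFdef]
    rw [integral_const_mul, integral_finset_sum _ (fun j _ => hintX n j),
      Finset.sum_congr rfl (fun j hj => hEX n j hj), Finset.sum_const, Nat.card_Icc,
      Nat.add_sub_cancel, nsmul_eq_mul]
    field_simp
  have hintegralF2 : ∀ n : ℕ, ∫ ω, (F n ω)^2 ∂ℙ = (1/(n:ℝ))^2 *
      ∑ j ∈ Finset.Icc 1 n, ∑ k ∈ Finset.Icc 1 n,
        ∫ ω, (((if Z (((j:ℝ)-1) * h n) ω = i then (1:ℝ) else 0) *
          (if Z ((j:ℝ) * h n) ω = i then (1:ℝ) else 0)) *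
         ((if Z (((k:ℝ)-1) * h n) ω = i then (1:ℝ) else 0) *
          (if Z ((k:ℝ) * h n) ω = i then (1:ℝ) else 0))) ∂ℙ := by
    intro n
    rw [hFsq n, integral_const_mul,
      integral_finset_sum _ (fun j _ => integrable_finset_sum _ (fun k _ => hintXX n j k))]
    congr 1
    exact Finset.sum_congr rfl fun j _ => integral_finset_sum _ (fun k _ => hintXX n j k)
  -- geometric ratio facts
  have hr0 : ∀ n, (0:ℝ) ≤ ρ ^ (h n) := fun n => Real.rpow_nonneg hρpos.le _
  have hr1 : ∀ n, ρ ^ (h n) < 1 := fun n => Real.rpow_lt_one hρpos.le hρlt (hhpos n)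
  -- bounds for c_n
  have hc0 : ∀ n, 0 ≤ π i * CTMC.Pm Q (h n) i i :=
    fun n => mul_nonneg hπi0 (hP0 _ (hhpos n).le)
  have hc1 : ∀ n, π i * CTMC.Pm Q (h n) i i ≤ 1 := by
    intro n
    calc π i * CTMC.Pm Q (h n) i i ≤ 1 * 1 :=
        mul_le_mul hπi1 (hP1 _ (hhpos n).le) (hP0 _ (hhpos n).le) (by norm_num)
      _ = 1 := by norm_num
  -- off-diagonal deviation bound (ordered)
  have hoffb : ∀ n : ℕ, ∀ j k : ℕ, j ∈ Finset.Icc 1 n → k ∈ Finset.Icc 1 n → j < k →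
      |(∫ ω, (((if Z (((j:ℝ)-1) * h n) ω = i then (1:ℝ) else 0) *
          (if Z ((j:ℝ) * h n) ω = i then (1:ℝ) else 0)) *
         ((if Z (((k:ℝ)-1) * h n) ω = i then (1:ℝ) else 0) *
          (if Z ((k:ℝ) * h n) ω = i then (1:ℝ) else 0))) ∂ℙ)
        - (π i * CTMC.Pm Q (h n) i i) ^ 2| ≤ 4 * (ρ ^ (h n)) ^ (k - j - 1) := by
    intro n j k hj hk hjk
    rw [hEXX n j k hj hk hjk]
    have hp0 : 0 ≤ CTMC.Pm Q (h n) i i := hP0 _ (hhpos n).le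
    have hp1 : CTMC.Pm Q (h n) i i ≤ 1 := hP1 _ (hhpos n).le
    have hΔ0 : 0 ≤ ((k:ℝ)-1-(j:ℝ)) * h n := by
      have : (j:ℝ) + 1 ≤ (k:ℝ) := by exact_mod_cast hjk
      exact mul_nonneg (by linarith) (hhpos n).le
    have hq := hconv _ hΔ0 i i
    have key : π i * CTMC.Pm Q (h n) i i * CTMC.Pm Q (((k:ℝ)-1-(j:ℝ)) * h n) i i
          * CTMC.Pm Q (h n) i i - (π i * CTMC.Pm Q (h n) i i) ^ 2
        = (π i * CTMC.Pm Q (h n) i i ^ 2)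
          * (CTMC.Pm Q (((k:ℝ)-1-(j:ℝ)) * h n) i i - π i) := by ring
    rw [key, abs_mul]
    have h1 : |π i * CTMC.Pm Q (h n) i i ^ 2| ≤ 1 := by
      rw [abs_of_nonneg (by positivity)]
      nlinarith
    have h3 : ρ ^ (((k:ℝ)-1-(j:ℝ)) * h n) = (ρ ^ (h n)) ^ (k - j - 1) := by
      have hcast : (((k - j - 1 : ℕ)) : ℝ) = (k:ℝ) - 1 - (j:ℝ) := by
        rw [Nat.cast_sub (by omega), Nat.cast_sub (by omega), Nat.cast_one]
        push_cast
        ring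
      rw [← hcast, mul_comm, Real.rpow_mul hρpos.le, Real.rpow_natCast]
    calc |π i * CTMC.Pm Q (h n) i i ^ 2|
          * |CTMC.Pm Q (((k:ℝ)-1-(j:ℝ)) * h n) i i - π i|
        ≤ 1 * (4 * ρ ^ (((k:ℝ)-1-(j:ℝ)) * h n)) :=
          mul_le_mul h1 hq (abs_nonneg _) (by norm_num)
      _ = 4 * (ρ ^ (h n)) ^ (k - j - 1) := by rw [one_mul, h3]
  -- unordered off-diagonal bound
  have hoffb2 : ∀ n : ℕ, ∀ j k : ℕ, j ∈ Finset.Icc 1 n → k ∈ Finset.Icc 1 n → j ≠ k →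
      |(∫ ω, (((if Z (((j:ℝ)-1) * h n) ω = i then (1:ℝ) else 0) *
          (if Z ((j:ℝ) * h n) ω = i then (1:ℝ) else 0)) *
         ((if Z (((k:ℝ)-1) * h n) ω = i then (1:ℝ) else 0) *
          (if Z ((k:ℝ) * h n) ω = i then (1:ℝ) else 0))) ∂ℙ)
        - (π i * CTMC.Pm Q (h n) i i) ^ 2|
      ≤ 4 * (ρ ^ (h n)) ^ (max j k - min j k - 1) := by
    intro n j k hj hk hjk
    rcases lt_or_gt_of_ne hjk with hlt | hgt
    · have hres := hoffb n j k hj hk hlt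
      rwa [max_eq_right hlt.le, min_eq_left hlt.le]
    · have hres := hoffb n k j hk hj hgt
      have hcomm : (∫ ω, (((if Z (((j:ℝ)-1) * h n) ω = i then (1:ℝ) else 0) *
          (if Z ((j:ℝ) * h n) ω = i then (1:ℝ) else 0)) *
         ((if Z (((k:ℝ)-1) * h n) ω = i then (1:ℝ) else 0) *
          (if Z ((k:ℝ) * h n) ω = i then (1:ℝ) else 0))) ∂ℙ)
          = ∫ ω, (((if Z (((k:ℝ)-1) * h n) ω = i then (1:ℝ) else 0) *
          (if Z ((k:ℝ) * h n) ω = i then (1:ℝ) else 0)) *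
         ((if Z (((j:ℝ)-1) * h n) ω = i then (1:ℝ) else 0) *
          (if Z ((j:ℝ) * h n) ω = i then (1:ℝ) else 0))) ∂ℙ := by
        apply integral_congr_ae
        refine ae_of_all _ fun ω => ?_
        ring
      rw [hcomm, max_eq_left hgt.le, min_eq_right hgt.le]
      exact hres
  -- diagonal deviation bound
  have hdiagb : ∀ n : ℕ, ∀ j ∈ Finset.Icc 1 n,
      |(∫ ω, (((if Z (((j:ℝ)-1) * h n) ω = i then (1:ℝ) else 0) *
          (if Z ((j:ℝ) * h n) ω = i then (1:ℝ) else 0)) *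
         ((if Z (((j:ℝ)-1) * h n) ω = i then (1:ℝ) else 0) *
          (if Z ((j:ℝ) * h n) ω = i then (1:ℝ) else 0))) ∂ℙ)
        - (π i * CTMC.Pm Q (h n) i i) ^ 2| ≤ 2 := by
    intro n j hj
    rw [hEXdiag n j hj]
    have h1 := hc0 n
    have h2 := hc1 n
    rw [abs_le]
    constructor <;> nlinarith
  -- variance identity
  have hVid : ∀ n : ℕ, 1 ≤ n → ∫ ω, (F n ω - π i) ^ 2 ∂ℙ
      = (1/(n:ℝ))^2 * (∑ j ∈ Finset.Icc 1 n, ∑ k ∈ Finset.Icc 1 n,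
          ((∫ ω, (((if Z (((j:ℝ)-1) * h n) ω = i then (1:ℝ) else 0) *
            (if Z ((j:ℝ) * h n) ω = i then (1:ℝ) else 0)) *
           ((if Z (((k:ℝ)-1) * h n) ω = i then (1:ℝ) else 0) *
            (if Z ((k:ℝ) * h n) ω = i then (1:ℝ) else 0))) ∂ℙ)
            - (π i * CTMC.Pm Q (h n) i i) ^ 2))
        + (π i * CTMC.Pm Q (h n) i i - π i) ^ 2 := by
    intro n hn
    have hn0 : ((n:ℝ)) ≠ 0 := by
      have : (0:ℝ) < (n:ℝ) := by exact_mod_cast Nat.lt_of_lt_of_le Nat.zero_lt_one hn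
      linarith
    have hexp : (fun ω => (F n ω - π i) ^ 2)
        = fun ω => ((F n ω)^2 - (2 * π i) * F n ω) + (π i)^2 := funext fun ω => by ring
    have hint2 : Integrable (fun ω => (2 * π i) * F n ω) ℙ := (hintF n).const_mul _
    have hint1 : Integrable (fun ω => (F n ω)^2 - (2 * π i) * F n ω) ℙ :=
      (hintF2 n).sub hint2
    rw [hexp, integral_add hint1 (integrable_const _),
      integral_sub (hintF2 n) hint2, integral_const_mul, integral_const,
      hintegralF n hn, hintegralF2 n]
    have hsplit : ∑ j ∈ Finset.Icc 1 n, ∑ k ∈ Finset.Icc 1 n,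
        ((∫ ω, (((if Z (((j:ℝ)-1) * h n) ω = i then (1:ℝ) else 0) *
            (if Z ((j:ℝ) * h n) ω = i then (1:ℝ) else 0)) *
           ((if Z (((k:ℝ)-1) * h n) ω = i then (1:ℝ) else 0) *
            (if Z ((k:ℝ) * h n) ω = i then (1:ℝ) else 0))) ∂ℙ)
            - (π i * CTMC.Pm Q (h n) i i) ^ 2)
        = (∑ j ∈ Finset.Icc 1 n, ∑ k ∈ Finset.Icc 1 n,
            ∫ ω, (((if Z (((j:ℝ)-1) * h n) ω = i then (1:ℝ) else 0) *
            (if Z ((j:ℝ) * h n) ω = i then (1:ℝ) else 0)) *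
           ((if Z (((k:ℝ)-1) * h n) ω = i then (1:ℝ) else 0) *
            (if Z ((k:ℝ) * h n) ω = i then (1:ℝ) else 0))) ∂ℙ)
          - (n:ℝ)^2 * (π i * CTMC.Pm Q (h n) i i) ^ 2 := by
      simp only [Finset.sum_sub_distrib, Finset.sum_const, Nat.card_Icc,
        Nat.add_sub_cancel, nsmul_eq_mul]
      ring
    rw [hsplit]
    have hc2 : (1/(n:ℝ))^2 * ((n:ℝ)^2 * (π i * CTMC.Pm Q (h n) i i) ^ 2)
        = (π i * CTMC.Pm Q (h n) i i) ^ 2 := by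
      field_simp
    rw [mul_sub, hc2]
    simp only [measure_univ, ENNReal.toReal_one, probReal_univ, smul_eq_mul, one_mul]
    ring
  -- variance bound
  have hVb : ∀ n : ℕ, 1 ≤ n → ∫ ω, (F n ω - π i) ^ 2 ∂ℙ
      ≤ (1/(n:ℝ)) * (2 + 8 * (1 / (1 - ρ ^ (h n))))
        + (π i * CTMC.Pm Q (h n) i i - π i) ^ 2 := by
    intro n hn
    have hn0 : (0:ℝ) < (n:ℝ) := by exact_mod_cast Nat.lt_of_lt_of_le Nat.zero_lt_one hn
    rw [hVid n hn]
    have hd := CTMC.double_sum_bound n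
      (fun j k => (∫ ω, (((if Z (((j:ℝ)-1) * h n) ω = i then (1:ℝ) else 0) *
            (if Z ((j:ℝ) * h n) ω = i then (1:ℝ) else 0)) *
           ((if Z (((k:ℝ)-1) * h n) ω = i then (1:ℝ) else 0) *
            (if Z ((k:ℝ) * h n) ω = i then (1:ℝ) else 0))) ∂ℙ)
            - (π i * CTMC.Pm Q (h n) i i) ^ 2)
      (ρ ^ (h n)) (hr0 n) (hr1 n) (hdiagb n) (hoffb2 n)
    have hstep : (1/(n:ℝ))^2 * (∑ j ∈ Finset.Icc 1 n, ∑ k ∈ Finset.Icc 1 n,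
        ((∫ ω, (((if Z (((j:ℝ)-1) * h n) ω = i then (1:ℝ) else 0) *
            (if Z ((j:ℝ) * h n) ω = i then (1:ℝ) else 0)) *
           ((if Z (((k:ℝ)-1) * h n) ω = i then (1:ℝ) else 0) *
            (if Z ((k:ℝ) * h n) ω = i then (1:ℝ) else 0))) ∂ℙ)
            - (π i * CTMC.Pm Q (h n) i i) ^ 2))
        ≤ (1/(n:ℝ)) * (2 + 8 * (1 / (1 - ρ ^ (h n)))) := by
      have habs : (1/(n:ℝ))^2 * (∑ j ∈ Finset.Icc 1 n, ∑ k ∈ Finset.Icc 1 n,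
          ((∫ ω, (((if Z (((j:ℝ)-1) * h n) ω = i then (1:ℝ) else 0) *
            (if Z ((j:ℝ) * h n) ω = i then (1:ℝ) else 0)) *
           ((if Z (((k:ℝ)-1) * h n) ω = i then (1:ℝ) else 0) *
            (if Z ((k:ℝ) * h n) ω = i then (1:ℝ) else 0))) ∂ℙ)
            - (π i * CTMC.Pm Q (h n) i i) ^ 2))
          ≤ (1/(n:ℝ))^2 * ((n:ℝ) * (2 + 8 * (1 / (1 - ρ ^ (h n))))) := by
        refine mul_le_mul_of_nonneg_left ((le_abs_self _).trans hd) (by positivity)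
      refine habs.trans (le_of_eq ?_)
      field_simp
    linarith
  -- spectral-gap-type lower bound on 1 - rho^h
  set lam : ℝ := -Real.log ρ with hlam
  have hlampos : 0 < lam := by
    have := Real.log_neg hρpos hρlt
    simp only [hlam]; linarith
  have hlow : ∀ n : ℕ, h n ≤ 1 → lam * h n / (1 + lam) ≤ 1 - ρ ^ (h n) := by
    intro n hn1
    have hh := hhpos n
    have e0 : ρ ^ (h n) = Real.exp (Real.log ρ * h n) := Real.rpow_def_of_pos hρpos (h n)
    have e1 : Real.log ρ * h n = -(lam * h n) := by simp only [hlam]; ring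
    have e2 : ρ ^ (h n) = (Real.exp (lam * h n))⁻¹ := by
      rw [e0, e1, Real.exp_neg]
    have e3 : 1 + lam * h n ≤ Real.exp (lam * h n) := by
      have := Real.add_one_le_exp (lam * h n)
      linarith
    have hpos1 : (0:ℝ) < 1 + lam * h n := by positivity
    have e4 : (Real.exp (lam * h n))⁻¹ ≤ (1 + lam * h n)⁻¹ :=
      inv_anti₀ hpos1 e3
    have e5 : 1 - (1 + lam * h n)⁻¹ = lam * h n / (1 + lam * h n) := by
      field_simp
      ring
    have e6 : lam * h n / (1 + lam) ≤ lam * h n / (1 + lam * h n) := by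
      apply div_le_div_of_nonneg_left (by positivity) hpos1
      nlinarith
    have e7 : ρ ^ (h n) ≤ (1 + lam * h n)⁻¹ := e2 ▸ e4
    calc lam * h n / (1 + lam) ≤ lam * h n / (1 + lam * h n) := e6
      _ = 1 - (1 + lam * h n)⁻¹ := e5.symm
      _ ≤ 1 - ρ ^ (h n) := by linarith
  -- eventual explicit bound
  have hUb : ∀ n : ℕ, 1 ≤ n → h n ≤ 1 →
      ∫ ω, (F n ω - π i) ^ 2 ∂ℙ ≤
        2/(n:ℝ) + (8 * (1 + lam) / lam) * ((n:ℝ) * h n)⁻¹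
          + (π i * CTMC.Pm Q (h n) i i - π i) ^ 2 := by
    intro n hn hn1
    have hn0 : (0:ℝ) < (n:ℝ) := by exact_mod_cast Nat.lt_of_lt_of_le Nat.zero_lt_one hn
    have hh := hhpos n
    have hlo := hlow n hn1
    have h1r : 0 < 1 - ρ ^ (h n) := sub_pos.2 (hr1 n)
    have hgeo : 1 / (1 - ρ ^ (h n)) ≤ (1 + lam) / (lam * h n) := by
      rw [div_le_div_iff₀ h1r (by positivity)]
      have hmul := mul_le_mul_of_nonneg_left hlo (by positivity : (0:ℝ) ≤ 1 + lam)
      calc 1 * (lam * h n) = (1 + lam) * (lam * h n / (1 + lam)) := by field_simp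
        _ ≤ (1 + lam) * (1 - ρ ^ (h n)) := hmul
    have hmain : (1/(n:ℝ)) * (2 + 8 * (1 / (1 - ρ ^ (h n))))
        ≤ 2/(n:ℝ) + (8 * (1 + lam) / lam) * ((n:ℝ) * h n)⁻¹ := by
      have step1 : 2 + 8 * (1 / (1 - ρ ^ (h n))) ≤ 2 + 8 * ((1 + lam) / (lam * h n)) := by
        have := mul_le_mul_of_nonneg_left hgeo (by norm_num : (0:ℝ) ≤ 8)
        linarith
      have step2 : (1/(n:ℝ)) * (2 + 8 * ((1 + lam) / (lam * h n)))
          = 2/(n:ℝ) + (8 * (1 + lam) / lam) * ((n:ℝ) * h n)⁻¹ := by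
        field_simp
      calc (1/(n:ℝ)) * (2 + 8 * (1 / (1 - ρ ^ (h n))))
          ≤ (1/(n:ℝ)) * (2 + 8 * ((1 + lam) / (lam * h n))) :=
            mul_le_mul_of_nonneg_left step1 (by positivity)
        _ = _ := step2
    have := hVb n hn
    linarith
  -- limits
  have hPlim : Tendsto (fun n => CTMC.Pm Q (h n) i i) atTop (nhds 1) := by
    have hcont := (CTMC.Pm_entry_continuous Q i i).tendsto 0
    have h0 : CTMC.Pm Q 0 i i = 1 := by
      rw [CTMC.Pm_zero]; exact Matrix.one_apply_eq i
    rw [h0] at hcont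
    exact hcont.comp hh0
  have hterm3 : Tendsto (fun n => (π i * CTMC.Pm Q (h n) i i - π i) ^ 2) atTop (nhds 0) := by
    have := (((tendsto_const_nhds (x := π i)).mul hPlim).sub
      (tendsto_const_nhds (x := π i))).pow 2
    simpa using this
  have hterm1 : Tendsto (fun n : ℕ => 2/(n:ℝ)) atTop (nhds 0) :=
    tendsto_const_div_atTop_nhds_zero_nat 2
  have hterm2 : Tendsto (fun n : ℕ => (8 * (1 + lam) / lam) * ((n:ℝ) * h n)⁻¹)
      atTop (nhds 0) := by
    have h1 := hnh.inv_tendsto_atTop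
    have h2 := h1.const_mul (8 * (1 + lam) / lam)
    simpa using h2
  have hU0 : Tendsto (fun n : ℕ => 2/(n:ℝ) + (8 * (1 + lam) / lam) * ((n:ℝ) * h n)⁻¹
      + (π i * CTMC.Pm Q (h n) i i - π i) ^ 2) atTop (nhds 0) := by
    have := (hterm1.add hterm2).add hterm3
    simpa using this
  have hVlim : Tendsto (fun n => ∫ ω, (F n ω - π i) ^ 2 ∂ℙ) atTop (nhds 0) := by
    apply squeeze_zero' ?_ ?_ hU0
    · exact Filter.Eventually.of_forall fun n => integral_nonneg fun ω => sq_nonneg _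
    · have hev1 : ∀ᶠ n : ℕ in atTop, 1 ≤ n := Filter.eventually_ge_atTop 1
      have hev2 : ∀ᶠ n : ℕ in atTop, h n < 1 := hh0.eventually (gt_mem_nhds one_pos)
      filter_upwards [hev1, hev2] with n hn1 hn2
      exact hUb n hn1 hn2.le
  have hintsq : ∀ n, Integrable (fun ω => (F n ω - π i) ^ 2) ℙ := by
    intro n
    have hexp : (fun ω => (F n ω - π i) ^ 2)
        = fun ω => ((F n ω)^2 - (2 * π i) * F n ω) + (π i)^2 := funext fun ω => by ring
    rw [hexp]
    exact ((hintF2 n).sub ((hintF n).const_mul _)).add (integrable_const _)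
  exact CTMC.tendstoInMeasure_of_sq ℙ F (π i) hintsq hVlim
end

section
/- Under the stationary continuous-time Markov chain setting, let (h_n) be a sequence of positive reals with h_n → 0, n h_n → ∞ and n h_n² → 0, and set t_j = j h_n and T_n = n h_n. Then for every k ∈ S, the random variables √(n h_n) · ( (1/n) ∑_{j=1}^{n} 1_{{Z_{t_j} = k}} − (1/T_n) ∫_0^{T_n} 1_{{Z_s = k}} ds ) converge to 0 in probability as n → ∞. -/
open MeasureTheory Finset Filter

section Aux

open NormedSpace Topology


lemma norm_exp_sub_one_le' {𝔸 : Type*} [NormedRing 𝔸] [NormedAlgebra ℝ 𝔸] [CompleteSpace 𝔸]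
    (x : 𝔸) : ‖exp x - 1‖ ≤ ‖x‖ * Real.exp ‖x‖ := by
  have hs : Summable fun n : ℕ => ((n.factorial : ℝ))⁻¹ • x ^ n := expSeries_summable' x
  have h0 : exp x = 1 + ∑' n : ℕ, (((n+1).factorial : ℝ))⁻¹ • x ^ (n+1) := by
    rw [exp_eq_tsum (𝕂 := ℝ)]
    simp only []
    rw [Summable.tsum_eq_zero_add hs]
    simp
  have hbound : ∀ n : ℕ, ‖(((n+1).factorial : ℝ))⁻¹ • x ^ (n+1)‖ ≤ ‖x‖ * (‖x‖ ^ n / n.factorial) := by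
    intro n
    rw [norm_smul]
    have h1 : ‖x ^ (n+1)‖ ≤ ‖x‖ ^ (n+1) := norm_pow_le' x (Nat.succ_pos n)
    have h2 : ‖(((n+1).factorial : ℝ))⁻¹‖ ≤ ((n.factorial : ℝ))⁻¹ := by
      rw [Real.norm_eq_abs, abs_of_nonneg (by positivity)]
      apply inv_anti₀ (by positivity)
      exact_mod_cast Nat.factorial_le (Nat.le_succ n)
    calc ‖(((n+1).factorial : ℝ))⁻¹‖ * ‖x ^ (n+1)‖ ≤ ((n.factorial : ℝ))⁻¹ * ‖x‖ ^ (n+1) := by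
          apply mul_le_mul h2 h1 (norm_nonneg _) (by positivity)
      _ = ‖x‖ * (‖x‖ ^ n / n.factorial) := by ring
  have hsum2 : Summable fun n : ℕ => ‖x‖ * (‖x‖ ^ n / n.factorial) :=
    (Real.summable_pow_div_factorial ‖x‖).mul_left _
  have hsum1 : Summable fun n : ℕ => ‖(((n+1).factorial : ℝ))⁻¹ • x ^ (n+1)‖ :=
    hsum2.of_nonneg_of_le (fun n => norm_nonneg _) hbound
  calc ‖exp x - 1‖ = ‖∑' n : ℕ, (((n+1).factorial : ℝ))⁻¹ • x ^ (n+1)‖ := by rw [h0, add_sub_cancel_left]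
    _ ≤ ∑' n : ℕ, ‖(((n+1).factorial : ℝ))⁻¹ • x ^ (n+1)‖ := norm_tsum_le_tsum_norm hsum1
    _ ≤ ∑' n : ℕ, ‖x‖ * (‖x‖ ^ n / n.factorial) := Summable.tsum_le_tsum hbound hsum1 hsum2
    _ = ‖x‖ * ∑' n : ℕ, ‖x‖ ^ n / n.factorial := tsum_mul_left
    _ = ‖x‖ * Real.exp ‖x‖ := by rw [Real.exp_eq_exp_ℝ, exp_eq_tsum_div]

section LocalNorm

attribute [local instance] Matrix.linftyOpNormedAddCommGroup Matrix.linftyOpNormedRing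
  Matrix.linftyOpNormedAlgebra

lemma abs_entry_le_linfty {N : ℕ} (A : Matrix (Fin N) (Fin N) ℝ) (i j : Fin N) :
    |A i j| ≤ ‖A‖ := by
  rw [Matrix.linfty_opNorm_def]
  calc |A i j| = ‖A i j‖ := rfl
    _ ≤ ∑ j', ‖A i j'‖ := Finset.single_le_sum (fun _ _ => norm_nonneg _) (Finset.mem_univ j)
    _ = ((∑ j', ‖A i j'‖₊ : NNReal) : ℝ) := by push_cast; rfl
    _ ≤ _ := by
        exact_mod_cast NNReal.coe_le_coe.2 (Finset.le_sup (f := fun i => ∑ j', ‖A i j'‖₊)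
          (Finset.mem_univ i))

lemma matexp_entry_bound_aux {N : ℕ} (Q : Matrix (Fin N) (Fin N) ℝ) :
    ∃ C : ℝ, 0 ≤ C ∧ ∀ u : ℝ, 0 ≤ u → u ≤ 1 → ∀ i j : Fin N,
      |exp (u • Q) i j - (if i = j then (1:ℝ) else 0)| ≤ C * u := by
  refine ⟨‖Q‖ * Real.exp ‖Q‖, by positivity, fun u hu hu1 i j => ?_⟩
  have h1 : |exp (u • Q) i j - (if i = j then (1:ℝ) else 0)| ≤ ‖exp (u • Q) - 1‖ := by
    have := abs_entry_le_linfty (exp (u • Q) - 1) i j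
    simpa [Matrix.sub_apply, Matrix.one_apply] using this
  have h2 : ‖exp (u • Q) - 1‖ ≤ ‖u • Q‖ * Real.exp ‖u • Q‖ := norm_exp_sub_one_le' _
  have h3 : ‖u • Q‖ = u * ‖Q‖ := by rw [norm_smul, Real.norm_eq_abs, abs_of_nonneg hu]
  refine h1.trans (h2.trans ?_)
  rw [h3]
  have : Real.exp (u * ‖Q‖) ≤ Real.exp ‖Q‖ :=
    Real.exp_le_exp.2 (by nlinarith [norm_nonneg Q])
  calc u * ‖Q‖ * Real.exp (u * ‖Q‖) ≤ u * ‖Q‖ * Real.exp ‖Q‖ := by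
        apply mul_le_mul_of_nonneg_left this (by positivity)
    _ = ‖Q‖ * Real.exp ‖Q‖ * u := by ring

end LocalNorm

-- now outside the section: bare instances
lemma matexp_entry_bound {N : ℕ} (Q : Matrix (Fin N) (Fin N) ℝ) :
    ∃ C : ℝ, 0 ≤ C ∧ ∀ u : ℝ, 0 ≤ u → u ≤ 1 → ∀ i j : Fin N,
      |exp (u • Q) i j - (if i = j then (1:ℝ) else 0)| ≤ C * u :=
  matexp_entry_bound_aux Q


lemma key_est {Ω : Type*} [MeasurableSpace Ω] (ℙ : Measure Ω) [IsProbabilityMeasure ℙ]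
    {N : ℕ} (Q : Matrix (Fin N) (Fin N) ℝ) (Z : ℝ → Ω → Fin N)
    (hZmeas : Measurable fun p : ℝ × Ω => Z p.1 p.2)
    (hMarkov : ∀ s t : ℝ, 0 ≤ s → s ≤ t → ∀ k : Fin N,
      MeasureTheory.condExp (filtZ Z s) ℙ (fun ω => if Z t ω = k then (1 : ℝ) else 0)
        =ᵐ[ℙ] fun ω => NormedSpace.exp ((t - s) • Q) (Z s ω) k)
    (k : Fin N) {C : ℝ} (hC0 : 0 ≤ C)
    (hC : ∀ u : ℝ, 0 ≤ u → u ≤ 1 → ∀ i j : Fin N,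
      |NormedSpace.exp (u • Q) i j - (if i = j then (1:ℝ) else 0)| ≤ C * u)
    {s t : ℝ} (hs : 0 ≤ s) (hst : s ≤ t) (hts1 : t - s ≤ 1) :
    ∫ ω, |(if Z t ω = k then (1:ℝ) else 0) - (if Z s ω = k then (1:ℝ) else 0)| ∂ℙ
      ≤ 2 * C * (t - s) := by
  have hZr : ∀ r : ℝ, Measurable (Z r) := fun r =>
    hZmeas.comp (measurable_const.prodMk measurable_id)
  have hgmeas : ∀ r : ℝ, Measurable (fun ω => if Z r ω = k then (1:ℝ) else 0) := fun r =>
    Measurable.ite ((hZr r) (measurableSet_singleton k)) measurable_const measurable_const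
  have hgint : ∀ r : ℝ, Integrable (fun ω => if Z r ω = k then (1:ℝ) else 0) ℙ := fun r => by
    refine (integrable_const (1:ℝ)).mono' (hgmeas r).aestronglyMeasurable ?_
    filter_upwards with ω
    by_cases hb : Z r ω = k <;> simp [hb]
  set A : Set Ω := {ω | Z s ω = k} with hAdef
  have hAmes : MeasurableSet A := (hZr s) (measurableSet_singleton k)
  have hm : filtZ Z s ≤ (inferInstance : MeasurableSpace Ω) := by
    refine iSup₂_le fun u hu => ?_
    exact (hZr u).comap_le
  have hAf : MeasurableSet[filtZ Z s] A := by
    have hle : MeasurableSpace.comap (Z s) ⊤ ≤ filtZ Z s :=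
      le_iSup₂ (f := fun u (_ : u ∈ Set.Icc (0:ℝ) s) => MeasurableSpace.comap (Z u) ⊤) s
        ⟨hs, le_refl s⟩
    exact hle _ ⟨{k}, trivial, rfl⟩
  have hAcf : MeasurableSet[filtZ Z s] Aᶜ := hAf.compl
  set gT : Ω → ℝ := fun ω => if Z t ω = k then (1:ℝ) else 0 with hgT
  set u : ℝ := t - s with hu
  have hu0 : 0 ≤ u := sub_nonneg.2 hst
  have htoReal : ∀ B : Set Ω, (ℙ B).toReal ≤ 1 := fun B => by
    have h1 : ℙ B ≤ 1 := prob_le_one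
    calc (ℙ B).toReal ≤ (1 : ENNReal).toReal :=
          ENNReal.toReal_mono ENNReal.one_ne_top h1
      _ = 1 := by simp
  -- split the integral
  have hFint : Integrable (fun ω => |gT ω - (if Z s ω = k then (1:ℝ) else 0)|) ℙ :=
    ((hgint t).sub (hgint s)).abs
  have hsplit : ∫ ω, |gT ω - (if Z s ω = k then (1:ℝ) else 0)| ∂ℙ
      = (∫ ω in A, (1 - gT ω) ∂ℙ) + ∫ ω in Aᶜ, gT ω ∂ℙ := by
    rw [← integral_add_compl hAmes hFint]
    congr 1
    · refine setIntegral_congr_fun hAmes fun ω hω => ?_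
      have hk : Z s ω = k := hω
      by_cases hb : Z t ω = k <;> simp [gT, hb, hk]
    · refine setIntegral_congr_fun hAmes.compl fun ω hω => ?_
      have hk : ¬ Z s ω = k := hω
      by_cases hb : Z t ω = k <;> simp [gT, hb, hk]
  -- conditional expectation rewriting
  have hcond := hMarkov s t hs hst k
  have hEA : ∫ ω in A, gT ω ∂ℙ = ∫ ω in A, NormedSpace.exp (u • Q) (Z s ω) k ∂ℙ := by
    rw [← setIntegral_condExp hm (hgint t) hAf]
    exact setIntegral_congr_ae (hm _ hAf) (hcond.mono fun ω hω _ => hω)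
  have hEAc : ∫ ω in Aᶜ, gT ω ∂ℙ = ∫ ω in Aᶜ, NormedSpace.exp (u • Q) (Z s ω) k ∂ℙ := by
    rw [← setIntegral_condExp hm (hgint t) hAcf]
    exact setIntegral_congr_ae (hm _ hAcf) (hcond.mono fun ω hω _ => hω)
  have hexpmeas : Measurable (fun ω => NormedSpace.exp (u • Q) (Z s ω) k) :=
    (measurable_from_top (f := fun i : Fin N => NormedSpace.exp (u • Q) i k)).comp (hZr s)
  have hexpint : Integrable (fun ω => NormedSpace.exp (u • Q) (Z s ω) k) ℙ := by
    refine (integrable_const (C * u + 1)).mono' hexpmeas.aestronglyMeasurable ?_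
    filter_upwards with ω
    have h1 := hC u hu0 (by linarith) (Z s ω) k
    rw [Real.norm_eq_abs]
    have h2 : |(if Z s ω = k then (1:ℝ) else 0)| ≤ 1 := by
      by_cases hb : Z s ω = k <;> simp [hb]
    have h3 : |NormedSpace.exp (u • Q) (Z s ω) k| - |(if Z s ω = k then (1:ℝ) else 0)|
        ≤ |NormedSpace.exp (u • Q) (Z s ω) k - (if Z s ω = k then (1:ℝ) else 0)| :=
      abs_sub_abs_le_abs_sub _ _
    linarith
  have hbound1 : ∫ ω in Aᶜ, gT ω ∂ℙ ≤ C * u := by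
    rw [hEAc]
    refine le_trans (le_abs_self _) ?_
    have hb := norm_setIntegral_le_of_norm_le_const (μ := ℙ)
      (s := Aᶜ) (C := C * u) (measure_lt_top _ _)
      (f := fun ω => NormedSpace.exp (u • Q) (Z s ω) k) ?_
    · rw [measureReal_def] at hb
      refine le_trans hb ?_
      nlinarith [htoReal Aᶜ, mul_nonneg hC0 hu0]
    · intro ω hω
      have hne : ¬ (Z s ω = k) := hω
      have := hC u hu0 (by linarith) (Z s ω) k
      rw [if_neg hne, sub_zero] at this
      simpa [Real.norm_eq_abs] using this
  have hbound2 : ∫ ω in A, (1 - gT ω) ∂ℙ ≤ C * u := by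
    have heq : ∫ ω in A, (1 - gT ω) ∂ℙ
        = ∫ ω in A, (1 - NormedSpace.exp (u • Q) (Z s ω) k) ∂ℙ := by
      rw [integral_sub (integrable_const 1).restrict (hgint t).restrict,
        integral_sub (integrable_const 1).restrict hexpint.restrict, hEA]
    rw [heq]
    refine le_trans (le_abs_self _) ?_
    have hb := norm_setIntegral_le_of_norm_le_const (μ := ℙ)
      (s := A) (C := C * u) (measure_lt_top _ _)
      (f := fun ω => 1 - NormedSpace.exp (u • Q) (Z s ω) k) ?_
    · rw [measureReal_def] at hb
      refine le_trans hb ?_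
      nlinarith [htoReal A, mul_nonneg hC0 hu0]
    · intro ω hω
      have hk : Z s ω = k := hω
      have h4 := hC u hu0 (by linarith) (Z s ω) k
      rw [if_pos hk] at h4
      show ‖1 - NormedSpace.exp (u • Q) (Z s ω) k‖ ≤ C * u
      rw [Real.norm_eq_abs, abs_sub_comm]
      exact h4
  rw [hsplit]
  have : 2 * C * (t - s) = C * u + C * u := by rw [hu]; ring
  rw [this]
  exact add_le_add hbound2 hbound1

end Aux

open Topology

theorem stmt12 {Ω : Type*} [MeasurableSpace Ω] (ℙ : Measure Ω) [IsProbabilityMeasure ℙ]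
    (N : ℕ) (hN : 2 ≤ N)
    (Q : Matrix (Fin N) (Fin N) ℝ)
    (hQoff : ∀ i j : Fin N, i ≠ j → 0 < Q i j)
    (hQdiag : ∀ i : Fin N, Q i i = -∑ j ∈ Finset.univ.erase i, Q i j)
    (π : Fin N → ℝ)
    (hπnn : ∀ i, 0 ≤ π i) (hπsum : ∑ i, π i = 1)
    (hπQ : ∀ j, ∑ i, π i * Q i j = 0)
    (hπuniq : ∀ π' : Fin N → ℝ, (∀ i, 0 ≤ π' i) → (∑ i, π' i = 1) →
      (∀ j, ∑ i, π' i * Q i j = 0) → π' = π)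
    (Z : ℝ → Ω → Fin N)
    (hZmeas : Measurable fun p : ℝ × Ω => Z p.1 p.2)
    (hZ0 : ∀ i, ℙ {ω | Z 0 ω = i} = ENNReal.ofReal (π i))
    (hMarkov : ∀ s t : ℝ, 0 ≤ s → s ≤ t → ∀ k : Fin N,
      MeasureTheory.condExp (filtZ Z s) ℙ (fun ω => if Z t ω = k then (1 : ℝ) else 0)
        =ᵐ[ℙ] fun ω => NormedSpace.exp ((t - s) • Q) (Z s ω) k)
    (h : ℕ → ℝ) (hhpos : ∀ n, 0 < h n)
    (hh0 : Tendsto h atTop (nhds 0))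
    (hnh : Tendsto (fun n : ℕ => (n : ℝ) * h n) atTop atTop)
    (hnh2 : Tendsto (fun n : ℕ => (n : ℝ) * h n ^ 2) atTop (nhds 0)) :
    -- `√(n h_n) ((1/n) ∑_{j=1}^n 1_{Z_{t_j}=k} − (1/T_n) ∫_0^{T_n} 1_{Z_s=k} ds) → 0`
    -- in probability, where `T_n = n h_n`.
    ∀ k : Fin N,
      TendstoInMeasure ℙ
        (fun (n : ℕ) (ω : Ω) =>
          Real.sqrt ((n : ℝ) * h n) *
            ((1 / (n : ℝ)) *
                ∑ j ∈ Finset.Icc 1 n, (if Z ((j : ℝ) * h n) ω = k then (1 : ℝ) else 0) -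
              (1 / ((n : ℝ) * h n)) *
                ∫ s in (0 : ℝ)..((n : ℝ) * h n), (if Z s ω = k then (1 : ℝ) else 0)))
        atTop (fun _ => (0 : ℝ)) := by
  intro k
  obtain ⟨C, hC0, hC⟩ := matexp_entry_bound Q
  -- notation
  set g : ℝ → Ω → ℝ := fun r ω => if Z r ω = k then (1:ℝ) else 0 with hg
  set f : ℕ → Ω → ℝ := fun n ω =>
    Real.sqrt ((n : ℝ) * h n) *
      ((1 / (n : ℝ)) * ∑ j ∈ Finset.Icc 1 n, g ((j : ℝ) * h n) ω -
        (1 / ((n : ℝ) * h n)) * ∫ s in (0 : ℝ)..((n : ℝ) * h n), g s ω) with hf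
  show TendstoInMeasure ℙ f atTop fun _ => (0 : ℝ)
  have hZr : ∀ r : ℝ, Measurable (Z r) := fun r =>
    hZmeas.comp (measurable_const.prodMk measurable_id)
  have hgmeas : ∀ r : ℝ, Measurable (g r) := fun r =>
    Measurable.ite ((hZr r) (measurableSet_singleton k)) measurable_const measurable_const
  have hgbd : ∀ r ω, ‖g r ω‖ ≤ 1 := by
    intro r ω; by_cases hb : Z r ω = k <;> simp [g, hb]
  have hg01 : ∀ r ω, 0 ≤ g r ω := by
    intro r ω; by_cases hb : Z r ω = k <;> simp [g, hb]
  -- joint measurability (with ω first)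
  have hGmeas : Measurable fun p : Ω × ℝ => g p.2 p.1 :=
    Measurable.ite ((hZmeas.comp measurable_swap) (measurableSet_singleton k))
      measurable_const measurable_const
  -- interval integrability of bounded measurable functions of s
  have hII : ∀ (F : ℝ → ℝ), Measurable F → (∀ x, ‖F x‖ ≤ 2) →
      ∀ a b : ℝ, IntervalIntegrable F volume a b := by
    intro F hFm hFb a b
    refine (intervalIntegrable_const (c := (2:ℝ))).mono_fun hFm.aestronglyMeasurable ?_
    filter_upwards with x
    simpa using (hFb x).trans (by norm_num)
  have hZsec : ∀ ω, Measurable fun s => Z s ω := fun ω =>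
    hZmeas.comp (measurable_id.prodMk measurable_const)
  have hgsec : ∀ ω, Measurable fun s => g s ω := fun ω =>
    Measurable.ite ((hZsec ω) (measurableSet_singleton k)) measurable_const measurable_const
  have hIIg : ∀ ω (a b : ℝ), IntervalIntegrable (fun s => g s ω) volume a b := fun ω a b =>
    hII _ (hgsec ω) (fun x => (hgbd x ω).trans (by norm_num)) a b
  -- measurability of ω ↦ ∫ s in Ioc a b, g s ω
  have hImeas : ∀ a b : ℝ, Measurable fun ω => ∫ s in Set.Ioc a b, g s ω := by
    intro a b
    have := (hGmeas.stronglyMeasurable.integral_prod_right'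
      (ν := volume.restrict (Set.Ioc a b)))
    exact this.measurable
  -- measurability of f n
  have hfmeas : ∀ n : ℕ, Measurable (f n) := by
    intro n
    have hT : (0:ℝ) ≤ (n:ℝ) * h n := mul_nonneg (Nat.cast_nonneg n) (hhpos n).le
    have h1 : (fun ω => ∫ s in (0:ℝ)..((n:ℝ) * h n), g s ω)
        = fun ω => ∫ s in Set.Ioc (0:ℝ) ((n:ℝ)*h n), g s ω := by
      funext ω; rw [intervalIntegral.integral_of_le hT]
    have h2 : Measurable fun ω => ∫ s in (0:ℝ)..((n:ℝ) * h n), g s ω := by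
      rw [h1]; exact hImeas 0 _
    exact measurable_const.mul (Measurable.sub
      (measurable_const.mul (Finset.measurable_sum _ fun j _ => hgmeas _))
      (measurable_const.mul h2))
  -- the central eventual bound
  have hbound : ∀ᶠ n : ℕ in atTop, Integrable (f n) ℙ ∧
      ∫ ω, ‖f n ω‖ ∂ℙ ≤ 2*C*(Real.sqrt ((n:ℝ)*h n) * h n) := by
    filter_upwards [eventually_ge_atTop 1, hh0.eventually_le_const (by norm_num : (0:ℝ) < 1)]
      with n hn1 hh1
    have hp : 0 < h n := hhpos n
    have hnR : (0:ℝ) < (n:ℝ) := by exact_mod_cast hn1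
    set T : ℝ := (n:ℝ) * h n with hT
    have hT0 : 0 < T := by positivity
    set a : ℕ → ℝ := fun i => (i:ℝ) * h n with ha
    have ha0 : a 0 = 0 := by simp [ha]
    have haT : a n = T := rfl
    have hastep : ∀ i : ℕ, a (i+1) - a i = h n := by
      intro i; simp only [ha]; push_cast; ring
    have hamono : ∀ i : ℕ, a i ≤ a (i+1) := fun i => by
      have := hastep i; linarith
    have ha_nn : ∀ i : ℕ, 0 ≤ a i := fun i => by positivity
    -- φ i ω
    set φ : ℕ → Ω → ℝ := fun i ω => ∫ s in (a i)..(a (i+1)), |g (a (i+1)) ω - g s ω| with hφ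
    have hIId : ∀ i ω, IntervalIntegrable (fun s => g (a (i+1)) ω - g s ω) volume (a i) (a (i+1)) := by
      intro i ω
      refine hII _ ((measurable_const.sub (hgsec ω))) (fun x => ?_) _ _
      have := hgbd (a (i+1)) ω; have := hgbd x ω
      rw [Real.norm_eq_abs] at *
      show |g (a (i+1)) ω - g x ω| ≤ 2
      rw [abs_sub_comm]
      calc |g x ω - g (a (i+1)) ω| ≤ |g x ω| + |g (a (i+1)) ω| := abs_sub _ _
        _ ≤ 2 := by linarith
    have hφnn : ∀ i ω, 0 ≤ φ i ω := by
      intro i ω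
      rw [hφ]
      exact intervalIntegral.integral_nonneg (hamono i) (fun s _ => abs_nonneg _)
    have hφbd : ∀ i ω, φ i ω ≤ 2 * h n := by
      intro i ω
      have h1 : ‖∫ s in (a i)..(a (i+1)), |g (a (i+1)) ω - g s ω|‖ ≤ 2 * |a (i+1) - a i| := by
        refine intervalIntegral.norm_integral_le_of_norm_le_const fun x _ => ?_
        rw [Real.norm_eq_abs, abs_abs]
        have h2 := hgbd (a (i+1)) ω; have h3 := hgbd x ω
        rw [Real.norm_eq_abs] at h2 h3
        calc |g (a (i+1)) ω - g x ω| ≤ |g (a (i+1)) ω| + |g x ω| := abs_sub _ _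
          _ ≤ 2 := by linarith
      rw [Real.norm_eq_abs, hastep i, abs_of_pos hp] at h1
      exact (le_abs_self (φ i ω)).trans h1
    -- pointwise domination
    have hptw : ∀ ω, ‖f n ω‖ ≤ Real.sqrt T * (1/T) * ∑ i ∈ Finset.range n, φ i ω := by
      intro ω
      have hsum1 : ∑ j ∈ Finset.Icc 1 n, g ((j:ℝ) * h n) ω
          = ∑ i ∈ Finset.range n, g (a (i+1)) ω := by
        have : Finset.Icc 1 n = Finset.Ico 1 (n+1) := by
          rw [Finset.Ico_add_one_right_eq_Icc]
        rw [this, Finset.sum_Ico_eq_sum_range]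
        simp only [Nat.add_sub_cancel]
        refine Finset.sum_congr rfl fun i _ => ?_
        have : ((1 + i : ℕ) : ℝ) = ((i + 1 : ℕ) : ℝ) := by push_cast; ring
        simp only [ha]
        rw [this]
      have hIeq : ∫ s in (0:ℝ)..T, g s ω
          = ∑ i ∈ Finset.range n, ∫ s in (a i)..(a (i+1)), g s ω := by
        rw [← ha0, ← haT]
        exact (intervalIntegral.sum_integral_adjacent_intervals fun i _ => hIIg ω _ _).symm
      have hconst : ∀ i : ℕ, h n * g (a (i+1)) ω
          = ∫ s in (a i)..(a (i+1)), g (a (i+1)) ω := by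
        intro i
        rw [intervalIntegral.integral_const, hastep i, smul_eq_mul]
      have hD : ∀ i : ℕ, h n * g (a (i+1)) ω - (∫ s in (a i)..(a (i+1)), g s ω)
          = ∫ s in (a i)..(a (i+1)), (g (a (i+1)) ω - g s ω) := by
        intro i
        rw [hconst i, ← intervalIntegral.integral_sub (intervalIntegrable_const) (hIIg ω _ _)]
      have hfD : f n ω = Real.sqrt T * ((1/T) *
          ∑ i ∈ Finset.range n, ∫ s in (a i)..(a (i+1)), (g (a (i+1)) ω - g s ω)) := by
        have h2 : ∑ i ∈ Finset.range n, ∫ s in (a i)..(a (i+1)), (g (a (i+1)) ω - g s ω)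
            = h n * (∑ i ∈ Finset.range n, g (a (i+1)) ω)
              - ∑ i ∈ Finset.range n, ∫ s in (a i)..(a (i+1)), g s ω := by
          rw [Finset.mul_sum, ← Finset.sum_sub_distrib]
          exact Finset.sum_congr rfl fun i _ => (hD i).symm
        rw [hf]
        simp only [← hT]
        rw [hsum1, hIeq, h2]
        have hTne : T ≠ 0 := ne_of_gt hT0
        have hnne : (n:ℝ) ≠ 0 := ne_of_gt hnR
        field_simp
        ring
      rw [hfD, Real.norm_eq_abs, abs_mul, abs_of_nonneg (Real.sqrt_nonneg T), abs_mul,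
        abs_of_nonneg (by positivity : (0:ℝ) ≤ 1/T)]
      have h3 : |∑ i ∈ Finset.range n, ∫ s in (a i)..(a (i+1)), (g (a (i+1)) ω - g s ω)|
          ≤ ∑ i ∈ Finset.range n, φ i ω := by
        refine le_trans (Finset.abs_sum_le_sum_abs _ _) (Finset.sum_le_sum fun i _ => ?_)
        exact intervalIntegral.abs_integral_le_integral_abs (hamono i)
      rw [← mul_assoc]
      exact mul_le_mul_of_nonneg_left h3 (by positivity)
    -- measurability and integrability of φ i
    have hφmeas : ∀ i, Measurable (φ i) := by
      intro i
      have h1 : φ i = fun ω => ∫ s in Set.Ioc (a i) (a (i+1)), |g (a (i+1)) ω - g s ω| := by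
        funext ω; rw [hφ]; exact intervalIntegral.integral_of_le (hamono i)
      rw [h1]
      have hjm : Measurable fun p : Ω × ℝ => |g (a (i+1)) p.1 - g p.2 p.1| :=
        (((hgmeas (a (i+1))).comp measurable_fst).sub hGmeas).abs
      exact (hjm.stronglyMeasurable.integral_prod_right'
        (ν := volume.restrict (Set.Ioc (a i) (a (i+1))))).measurable
    have hφint : ∀ i, Integrable (φ i) ℙ := fun i =>
      (integrable_const (2 * h n)).mono' (hφmeas i).aestronglyMeasurable
        (Eventually.of_forall fun ω => by
          rw [Real.norm_eq_abs, abs_of_nonneg (hφnn i ω)]; exact hφbd i ω)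
    -- expectation of each φ i via Fubini and the key estimate
    have hφexp : ∀ i ∈ Finset.range n, ∫ ω, φ i ω ∂ℙ ≤ (2*C*h n) * h n := by
      intro i _
      set ν := volume.restrict (Set.Ioc (a i) (a (i+1))) with hν
      haveI : IsFiniteMeasure ν := ⟨by
        rw [hν, Measure.restrict_apply_univ]; exact measure_Ioc_lt_top⟩
      have hjm : Measurable fun p : Ω × ℝ => |g (a (i+1)) p.1 - g p.2 p.1| :=
        (((hgmeas (a (i+1))).comp measurable_fst).sub hGmeas).abs
      have hjbd : ∀ p : Ω × ℝ, ‖|g (a (i+1)) p.1 - g p.2 p.1|‖ ≤ 2 := by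
        intro p
        rw [Real.norm_eq_abs, abs_abs]
        have h1 := hgbd (a (i+1)) p.1; have h2 := hgbd p.2 p.1
        rw [Real.norm_eq_abs] at h1 h2
        calc |g (a (i+1)) p.1 - g p.2 p.1| ≤ |g (a (i+1)) p.1| + |g p.2 p.1| := abs_sub _ _
          _ ≤ 2 := by linarith
      have huncur : Integrable (Function.uncurry fun ω s => |g (a (i+1)) ω - g s ω|)
          (ℙ.prod ν) :=
        (integrable_const (2:ℝ)).mono' hjm.aestronglyMeasurable
          (Eventually.of_forall hjbd)
      have hswap : ∫ ω, φ i ω ∂ℙ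
          = ∫ s, (∫ ω, |g (a (i+1)) ω - g s ω| ∂ℙ) ∂ν := by
        have h1 : ∀ ω, φ i ω = ∫ s, |g (a (i+1)) ω - g s ω| ∂ν := fun ω => by
          rw [hφ]; exact intervalIntegral.integral_of_le (hamono i)
        simp_rw [h1]
        exact integral_integral_swap huncur
      rw [hswap, hν]
      have hb2 := norm_setIntegral_le_of_norm_le_const (μ := volume)
        (s := Set.Ioc (a i) (a (i+1))) (C := 2*C*h n) measure_Ioc_lt_top
        (f := fun s => ∫ ω, |g (a (i+1)) ω - g s ω| ∂ℙ) ?_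
      · rw [measureReal_def] at hb2
        have hvol : (volume (Set.Ioc (a i) (a (i+1)))).toReal = h n := by
          rw [Real.volume_Ioc, ENNReal.toReal_ofReal (by linarith [hastep i])]
          exact hastep i
        rw [hvol] at hb2
        exact (le_abs_self _).trans hb2
      · intro s hsmem
        obtain ⟨hs1, hs2⟩ := hsmem
        have hs0 : 0 ≤ s := le_trans (ha_nn i) (le_of_lt hs1)
        have hkey := key_est ℙ Q Z hZmeas hMarkov k hC0 hC hs0 hs2
          (by linarith [hastep i, hh1])
        rw [Real.norm_eq_abs, abs_of_nonneg (integral_nonneg fun ω => abs_nonneg _)]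
        exact hkey.trans (by nlinarith [hastep i, hs1, hC0])
    -- assemble
    have hRHSint : Integrable (fun ω => Real.sqrt T * (1/T) * ∑ i ∈ Finset.range n, φ i ω) ℙ :=
      (integrable_finset_sum _ fun i _ => hφint i).const_mul _
    have hfint : Integrable (f n) ℙ :=
      hRHSint.mono' (hfmeas n).aestronglyMeasurable (Eventually.of_forall fun ω => hptw ω)
    refine ⟨hfint, ?_⟩
    have hmono2 : ∫ ω, ‖f n ω‖ ∂ℙ
        ≤ ∫ ω, Real.sqrt T * (1/T) * ∑ i ∈ Finset.range n, φ i ω ∂ℙ :=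
      integral_mono hfint.norm hRHSint fun ω => hptw ω
    have hsplit2 : ∫ ω, Real.sqrt T * (1/T) * ∑ i ∈ Finset.range n, φ i ω ∂ℙ
        = Real.sqrt T * (1/T) * ∑ i ∈ Finset.range n, ∫ ω, φ i ω ∂ℙ := by
      rw [integral_const_mul, integral_finset_sum _ fun i _ => hφint i]
    have hsum_le : ∑ i ∈ Finset.range n, ∫ ω, φ i ω ∂ℙ ≤ (n:ℝ) * ((2*C*h n) * h n) := by
      calc ∑ i ∈ Finset.range n, ∫ ω, φ i ω ∂ℙ
          ≤ ∑ _i ∈ Finset.range n, (2*C*h n) * h n := Finset.sum_le_sum hφexp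
        _ = (n:ℝ) * ((2*C*h n) * h n) := by
            rw [Finset.sum_const, Finset.card_range, nsmul_eq_mul]
    calc ∫ ω, ‖f n ω‖ ∂ℙ
        ≤ Real.sqrt T * (1/T) * ∑ i ∈ Finset.range n, ∫ ω, φ i ω ∂ℙ := by
          rw [← hsplit2]; exact hmono2
      _ ≤ Real.sqrt T * (1/T) * ((n:ℝ) * ((2*C*h n) * h n)) :=
          mul_le_mul_of_nonneg_left hsum_le (by positivity)
      _ = 2*C*(Real.sqrt T * h n) := by
          have hTne : T ≠ 0 := ne_of_gt hT0
          rw [hT]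
          field_simp
  -- limit of the bound
  have hb0 : Tendsto (fun n : ℕ => 2*C*(Real.sqrt ((n:ℝ)*h n) * h n)) atTop (𝓝 0) := by
    have h1 : Tendsto (fun n : ℕ => ((n:ℝ) * h n ^ 2) * h n) atTop (𝓝 0) := by
      simpa using hnh2.mul hh0
    have h2 : Tendsto (fun n : ℕ => Real.sqrt (((n:ℝ) * h n ^ 2) * h n)) atTop (𝓝 0) := by
      have := (Real.continuous_sqrt.tendsto 0).comp h1
      simpa [Function.comp_def] using this
    have h3 : ∀ n : ℕ, Real.sqrt ((n:ℝ)*h n) * h n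
        = Real.sqrt (((n:ℝ) * h n ^ 2) * h n) := by
      intro n
      rw [show ((n:ℝ) * h n ^ 2) * h n = ((n:ℝ) * h n) * (h n)^2 by ring,
        Real.sqrt_mul (mul_nonneg (Nat.cast_nonneg n) (hhpos n).le) ((h n)^2),
        Real.sqrt_sq (hhpos n).le]
    have h4 := h2.const_mul (2*C)
    rw [mul_zero] at h4
    have h5 : (fun n : ℕ => 2*C*(Real.sqrt ((n:ℝ)*h n) * h n))
        = fun n : ℕ => 2*C*(Real.sqrt (((n:ℝ) * h n ^ 2) * h n)) := by
      funext n; rw [h3 n]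
    rw [h5]
    exact h4
  -- conclude via L¹ convergence
  refine tendstoInMeasure_of_tendsto_eLpNorm (p := 1) one_ne_zero
    (fun n => (hfmeas n).aestronglyMeasurable) aestronglyMeasurable_const ?_
  have hfg : (fun n => eLpNorm ((f n) - fun _ => (0:ℝ)) 1 ℙ) = fun n => eLpNorm (f n) 1 ℙ := by
    funext n
    congr 1
    funext ω
    simp
  rw [hfg]
  have hofReal : Tendsto (fun n : ℕ => ENNReal.ofReal (2*C*(Real.sqrt ((n:ℝ)*h n) * h n)))
      atTop (𝓝 0) := by
    have := ENNReal.tendsto_ofReal hb0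
    simpa using this
  refine tendsto_of_tendsto_of_tendsto_of_le_of_le' tendsto_const_nhds hofReal
    (Eventually.of_forall fun n => zero_le) ?_
  filter_upwards [hbound] with n hn
  rw [eLpNorm_one_eq_lintegral_enorm, ← ofReal_integral_norm_eq_lintegral_enorm hn.1]
  exact ENNReal.ofReal_le_ofReal hn.2
end
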